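/- Let K > 0 be real and set f(K) = (exp(4π/K) − 1)/(exp(4π/K) − 1/4). Then there exists A₀ ∈ (0,1) such that for all A ∈ (0, A₀) and all λ with f(K)·A < λ < A, the map F̄ induced on (ℝ/2πℤ) × ℝ by F(x,y) = (x − K·ln(y + A + λ·sin x), (y + A + λ·sin x)^δ) admits a nonempty compact invariant set Λ ⊂ (ℝ/2πℤ) × [0, A] (contained in the region where y + A + λ·sin x > 0, with F̄(Λ) = Λ) together with a homeomorphism h from Λ onto the space {0,1}^ℤ of two-sided binary sequences (with the product topology) satisfying h ∘ F̄ = σ ∘ h on Λ, where σ is the left shift. That is, F̄ restricted to Λ is topologically conjugate to the full Bernoulli shift on two symbols. -/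

import Mathlib

open Real

noncomputable section
namespace ThmE

def EK (K : ℝ) : ℝ := Real.exp (4*π/K)
def fK (K : ℝ) : ℝ := (EK K - 1)/(EK K - 1/4)
def rho (K : ℝ) : ℝ := min (1/10) (min ((2/3)*Real.exp (-(4*π+1)/K)) (Real.log (1 + fK K)/2))
def lo (K : ℝ) : ℝ := π/2 + rho K
def hi (K : ℝ) : ℝ := 3*π/2 - rho K
def em (K : ℝ) : ℝ := K * fK K * rho K / 6
def beta (K : ℝ) : ℝ := 1/(1 + em K)
def gam (K : ℝ) : ℝ := (1 + beta K)/2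
def PP (K : ℝ) : ℝ := 5*K/(rho K)^2
def MM (K : ℝ) : ℝ := max 1 (2*PP K/(1 - beta K))
def tau0 (K : ℝ) : ℝ := min 1 (K * Real.log (1 + fK K)/2)
def epsmax (δ K : ℝ) : ℝ :=
  min 1 (min ((rho K)^2 * tau0 K/(5*K)) (min (gam K/(2*MM K)*(3/δ)) ((1-beta K)/(4*PP K)*(3/δ))))
def A0 (δ K : ℝ) : ℝ := min (1/2) ((epsmax δ K/3^δ)^(1/(δ-1)))

structure Hyp (δ K A lam : ℝ) : Prop where
  hδ : 1 < δ
  hK : 0 < K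
  hA : 0 < A
  hA1 : A < 1
  hlamlo : fK K * A < lam
  hlamhi : lam < A
  heps : 3^δ * A^(δ-1) ≤ epsmax δ K

def rr (A lam : ℝ) : ℝ := lam/A
def eps (δ A : ℝ) : ℝ := 3^δ * A^(δ-1)
def tau (δ K A : ℝ) : ℝ := 5*K*(eps δ A)/(rho K)^2
def kap (δ A : ℝ) : ℝ := δ * 3^(δ-1) * A^(δ-1)
def W0 (A lam x : ℝ) : ℝ := 1 + rr A lam * Real.sin x
def gg (K A lam Y x : ℝ) : ℝ := x - K*Real.log A - K*Real.log (W0 A lam x + Y)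
def qq (δ A lam θ Y : ℝ) : ℝ := A^(δ-1) * (W0 A lam θ + Y)^δ

section Basic
variable {δ K A lam : ℝ}

lemma EK_gt_one (hK : 0 < K) : 1 < EK K :=
  one_lt_exp_iff.mpr (by positivity)

lemma fK_pos (hK : 0 < K) : 0 < fK K := by
  have h1 := EK_gt_one hK
  have : (0:ℝ) < EK K - 1/4 := by linarith
  exact div_pos (by linarith) this

lemma fK_lt_one (hK : 0 < K) : fK K < 1 := by
  have h1 := EK_gt_one hK
  rw [fK, div_lt_one (by linarith)]; linarith

lemma rho_pos (hK : 0 < K) : 0 < rho K := by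
  have h2 : (0:ℝ) < (2/3)*Real.exp (-(4*π+1)/K) := by positivity
  have h3 : 0 < Real.log (1 + fK K)/2 := by
    have := fK_pos hK
    have := Real.log_pos (by linarith : (1:ℝ) < 1 + fK K)
    linarith
  simp only [rho, lt_min_iff]
  exact ⟨by norm_num, h2, h3⟩

lemma rho_le_tenth : rho K ≤ 1/10 := min_le_left _ _

lemma rho_le_exp : rho K ≤ (2/3)*Real.exp (-(4*π+1)/K) :=
  le_trans (min_le_right _ _) (min_le_left _ _)

lemma rho_le_log : rho K ≤ Real.log (1 + fK K)/2 :=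
  le_trans (min_le_right _ _) (min_le_right _ _)

lemma em_pos (hK : 0 < K) : 0 < em K := by
  have := fK_pos hK; have := rho_pos hK
  unfold em; positivity

lemma beta_pos (hK : 0 < K) : 0 < beta K := by
  have := em_pos hK; unfold beta; positivity

lemma beta_lt_one (hK : 0 < K) : beta K < 1 := by
  have := em_pos hK
  rw [beta, div_lt_one (by linarith)]; linarith

lemma gam_lt_one (hK : 0 < K) : gam K < 1 := by
  have := beta_lt_one hK; rw [gam]; linarith

lemma gam_pos (hK : 0 < K) : 0 < gam K := by
  have := beta_pos hK; rw [gam]; linarith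

lemma beta_le_gam (hK : 0 < K) : beta K ≤ gam K := by
  have := beta_lt_one hK; rw [gam]; linarith

lemma PP_pos (hK : 0 < K) : 0 < PP K := by
  have := rho_pos hK; unfold PP; positivity

lemma MM_ge_one : 1 ≤ MM K := le_max_left _ _

lemma MM_pos : 0 < MM K := lt_of_lt_of_le one_pos MM_ge_one

lemma MM_ge : 2*PP K/(1 - beta K) ≤ MM K := le_max_right _ _

lemma tau0_pos (hK : 0 < K) : 0 < tau0 K := by
  have := fK_pos hK
  have := Real.log_pos (by linarith : (1:ℝ) < 1 + fK K)
  simp only [tau0, lt_min_iff]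
  constructor
  · norm_num
  · positivity

lemma tau0_le_one : tau0 K ≤ 1 := min_le_left _ _

end Basic

section Main
variable {δ K A lam : ℝ}

namespace Hyp
variable (h : Hyp δ K A lam)
include h

lemma r_lt_one : rr A lam < 1 := (div_lt_one h.hA).mpr h.hlamhi

lemma fK_lt_r : fK K < rr A lam := by
  rw [rr, lt_div_iff₀ h.hA]; exact h.hlamlo

lemma r_pos : 0 < rr A lam := lt_trans (fK_pos h.hK) h.fK_lt_r

lemma hyp4pi : 4*π/K < Real.log (1 - rr A lam/4) - Real.log (1 - rr A lam) := by
  set r := rr A lam with hrdef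
  have hr1 : r < 1 := h.r_lt_one
  have hrf : fK K < r := h.fK_lt_r
  have hK := h.hK
  have hE1 : 1 < EK K := EK_gt_one hK
  have hEr : EK K * (1 - r) < 1 - r/4 := by
    have hd : (0:ℝ) < EK K - 1/4 := by linarith
    rw [fK, div_lt_iff₀ hd] at hrf
    nlinarith
  have h1r : 0 < 1 - r := by linarith
  have h1r4 : 0 < 1 - r/4 := by linarith
  have hlt : EK K < (1 - r/4)/(1-r) := by
    rw [lt_div_iff₀ h1r]; linarith
  have hlog := Real.log_lt_log (by positivity : (0:ℝ) < EK K) hlt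
  rw [Real.log_div (ne_of_gt h1r4) (ne_of_gt h1r)] at hlog
  have hle : Real.log (EK K) = 4*π/K := Real.log_exp _
  linarith

lemma eps_pos : 0 < eps δ A := by
  have hA := h.hA; unfold eps; positivity

lemma eps_le_one : eps δ A ≤ 1 :=
  le_trans h.heps (min_le_left _ _)

lemma tau_pos : 0 < tau δ K A := by
  have := h.eps_pos; have := rho_pos h.hK; have hK := h.hK
  unfold tau; positivity

lemma tau_le_tau0 : tau δ K A ≤ tau0 K := by
  have h1 : eps δ A ≤ (rho K)^2 * tau0 K/(5*K) :=
    le_trans h.heps (le_trans (min_le_right _ _) (min_le_left _ _))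
  have hρ := rho_pos h.hK
  have hK := h.hK
  rw [tau, div_le_iff₀ (by positivity)]
  calc 5*K*eps δ A ≤ 5*K*((rho K)^2 * tau0 K/(5*K)) := by
        apply mul_le_mul_of_nonneg_left h1 (by positivity)
    _ = tau0 K * (rho K)^2 := by field_simp

lemma tau_le_one : tau δ K A ≤ 1 := le_trans h.tau_le_tau0 tau0_le_one

omit h in
lemma kap_eq : kap δ A = δ/3 * eps δ A := by
  have : (3:ℝ)^(δ-1) = 3^δ/3 := by
    rw [Real.rpow_sub_one (by norm_num : (3:ℝ) ≠ 0)]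
  rw [kap, eps, this]; ring

lemma kap_pos : 0 < kap δ A := by
  have hA := h.hA; have hδ : (0:ℝ) < δ := by linarith [h.hδ]
  unfold kap; positivity

lemma kap_le1 : kap δ A ≤ gam K/(2*MM K) := by
  have h1 : eps δ A ≤ gam K/(2*MM K)*(3/δ) :=
    le_trans h.heps (le_trans (min_le_right _ _) (le_trans (min_le_right _ _) (min_le_left _ _)))
  have hδ : (0:ℝ) < δ := by linarith [h.hδ]
  rw [kap_eq]
  calc δ/3 * eps δ A ≤ δ/3 * (gam K/(2*MM K)*(3/δ)) := by
        apply mul_le_mul_of_nonneg_left h1 (by positivity)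
    _ = gam K/(2*MM K) := by
        have hM : (MM K) ≠ 0 := ne_of_gt MM_pos
        field_simp
lemma kap_le2 : kap δ A ≤ (1 - beta K)/(4*PP K) := by
  have h1 : eps δ A ≤ (1-beta K)/(4*PP K)*(3/δ) :=
    le_trans h.heps (le_trans (min_le_right _ _) (le_trans (min_le_right _ _) (min_le_right _ _)))
  have hδ : (0:ℝ) < δ := by linarith [h.hδ]
  rw [kap_eq]
  calc δ/3 * eps δ A ≤ δ/3 * ((1-beta K)/(4*PP K)*(3/δ)) := by
        apply mul_le_mul_of_nonneg_left h1 (by positivity)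
    _ = (1-beta K)/(4*PP K) := by
        have hP : PP K ≠ 0 := ne_of_gt (PP_pos h.hK)
        field_simp

end Hyp

-- trig lemmas on the region
lemma rho_lt_pi_div_two (hK : 0 < K) : rho K < π/2 :=
  lt_of_le_of_lt rho_le_tenth (by linarith [pi_gt_three])

lemma sin_ge_sin_rho (hK : 0 < K) {t : ℝ} (ht : t ∈ Set.Icc (rho K) (π - rho K)) :
    Real.sin (rho K) ≤ Real.sin t := by
  have hρ := rho_pos hK
  have hρ2 := rho_lt_pi_div_two hK
  rcases le_or_gt t (π/2) with hc | hc
  · exact Real.strictMonoOn_sin.monotoneOn ⟨by linarith, by linarith⟩ ⟨by linarith [ht.1], hc⟩ ht.1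
  · rw [← Real.sin_pi_sub t]
    exact Real.strictMonoOn_sin.monotoneOn ⟨by linarith, by linarith⟩
      ⟨by linarith [ht.2], by linarith⟩ (by linarith [ht.2])

lemma cos_le_cos_rho (hK : 0 < K) {t : ℝ} (ht : t ∈ Set.Icc (rho K) (π - rho K)) :
    Real.cos t ≤ Real.cos (rho K) := by
  have hρ := rho_pos hK
  have hρ2 := rho_lt_pi_div_two hK
  exact Real.strictAntiOn_cos.antitoneOn ⟨by linarith, by linarith⟩
    ⟨by linarith [ht.1], by linarith [ht.2, pi_gt_three]⟩ ht.1

lemma region_t (hK : 0 < K) {x : ℝ} (hx : x ∈ Set.Icc (lo K) (hi K)) :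
    x - π/2 ∈ Set.Icc (rho K) (π - rho K) := by
  obtain ⟨h1, h2⟩ := hx
  rw [lo] at h1; rw [hi] at h2
  constructor <;> [linarith; linarith]

lemma sin_lower (hK : 0 < K) {x : ℝ} (hx : x ∈ Set.Icc (lo K) (hi K)) :
    -Real.cos (rho K) ≤ Real.sin x := by
  have ht := region_t hK hx
  have hs : Real.sin x = Real.cos (x - π/2) := by
    rw [← Real.sin_add_pi_div_two (x - π/2)]; ring_nf
  rw [hs]
  calc -Real.cos (rho K) = Real.cos (π - rho K) := by rw [Real.cos_pi_sub]
    _ ≤ Real.cos (x - π/2) := by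
        have hρ := rho_pos hK
        have hρ2 := rho_lt_pi_div_two hK
        exact Real.strictAntiOn_cos.antitoneOn
          ⟨by linarith [ht.1], by linarith [ht.2, pi_gt_three]⟩
          ⟨by linarith, by linarith⟩ ht.2

lemma neg_cos_lower (hK : 0 < K) {x : ℝ} (hx : x ∈ Set.Icc (lo K) (hi K)) :
    Real.sin (rho K) ≤ -Real.cos x := by
  have ht := region_t hK hx
  have hc : Real.cos x = -Real.sin (x - π/2) := by
    rw [← Real.cos_add_pi_div_two (x - π/2)]; ring_nf
  rw [hc, neg_neg]
  exact sin_ge_sin_rho hK ht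

lemma sin_rho_ge (hK : 0 < K) : rho K/2 ≤ Real.sin (rho K) := by
  have hρ := rho_pos hK
  have h1 := Real.mul_le_sin (le_of_lt hρ) (le_of_lt (rho_lt_pi_div_two hK))
  have hπ0 : (0:ℝ) < π := pi_pos
  have h12 : (1:ℝ)/2 ≤ 2/π := by
    rw [div_le_div_iff₀ (by norm_num) hπ0]
    linarith [pi_le_four]
  have h2 : rho K/2 ≤ 2/π * rho K := by
    calc rho K/2 = (1/2) * rho K := by ring
      _ ≤ 2/π * rho K := mul_le_mul_of_nonneg_right h12 (le_of_lt hρ)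
  linarith

lemma one_sub_cos_rho_le (hK : 0 < K) : 1 - Real.cos (rho K) ≤ (rho K)^2/2 := by
  have := Real.one_sub_sq_div_two_le_cos (x := rho K)
  linarith

lemma one_sub_cos_rho_ge (hK : 0 < K) : (rho K)^2/5 ≤ 1 - Real.cos (rho K) := by
  have hρ := rho_pos hK
  have habs : |rho K| ≤ π := by
    rw [abs_of_pos hρ]; linarith [rho_le_tenth (K:=K), pi_gt_three]
  have := Real.cos_le_one_sub_mul_cos_sq habs
  have hπ : π < 3.15 := pi_lt_d2
  have hπ3 := pi_gt_three
  have h15 : (1:ℝ)/5 ≤ 2/π^2 := by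
    rw [div_le_div_iff₀ (by norm_num) (by positivity)]
    nlinarith
  have h2 : (rho K)^2/5 ≤ 2/π^2 * (rho K)^2 := by
    calc (rho K)^2/5 = (1/5)*(rho K)^2 := by ring
      _ ≤ 2/π^2 * (rho K)^2 := mul_le_mul_of_nonneg_right h15 (sq_nonneg _)
  linarith

lemma cos_rho_pos (hK : 0 < K) : 0 < Real.cos (rho K) :=
  Real.cos_pos_of_mem_Ioo ⟨by linarith [rho_pos hK, pi_gt_three], rho_lt_pi_div_two hK⟩

lemma cos_rho_le_one : Real.cos (rho K) ≤ 1 := Real.cos_le_one _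

end Main

section WBounds
variable {δ K A lam : ℝ}
namespace Hyp
variable (h : Hyp δ K A lam)
include h

lemma W0_le (x : ℝ) : W0 A lam x ≤ 2 := by
  have hr1 := h.r_lt_one
  have hr0 := h.r_pos
  have hs : rr A lam * Real.sin x ≤ rr A lam * 1 :=
    mul_le_mul_of_nonneg_left (Real.sin_le_one x) (le_of_lt hr0)
  unfold W0; linarith

lemma W0_ge {x : ℝ} (hx : x ∈ Set.Icc (lo K) (hi K)) : (rho K)^2/5 ≤ W0 A lam x := by
  have hr1 := h.r_lt_one
  have hr0 := h.r_pos
  have hc0 := cos_rho_pos h.hK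
  have hs := sin_lower h.hK hx
  have h1 : rr A lam * (-Real.cos (rho K)) ≤ rr A lam * Real.sin x :=
    mul_le_mul_of_nonneg_left hs (le_of_lt hr0)
  have h2 : -Real.cos (rho K) ≤ rr A lam * (-Real.cos (rho K)) := by nlinarith
  have h3 := one_sub_cos_rho_ge h.hK
  unfold W0; linarith

set_option maxHeartbeats 1000000 in
lemma climb : 4*π + tau δ K A ≤
    K*(Real.log (1 + rr A lam * Real.cos (rho K)) - Real.log (1 - rr A lam * Real.cos (rho K))) := by
  set r := rr A lam with hrdef
  set ρ := rho K with hρdef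
  set c := Real.cos (rho K) with hcdef
  have hK := h.hK
  have hr1 : r < 1 := h.r_lt_one
  have hrf : fK K < r := h.fK_lt_r
  have hf0 : 0 < fK K := fK_pos hK
  have hr0 : 0 < r := h.r_pos
  have hc0 : 0 < c := cos_rho_pos hK
  have hc1 : c ≤ 1 := Real.cos_le_one _
  have hρ0 : 0 < ρ := rho_pos hK
  have hρt : ρ ≤ 1/10 := rho_le_tenth
  have h1c : 1 - c ≤ ρ^2/2 := one_sub_cos_rho_le hK
  have hrc1 : r*c < 1 := by nlinarith
  have hpos1 : 0 < 1 - r*c := by linarith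
  have hpos2 : (0:ℝ) < 1 + r*c := by nlinarith
  have htau1 : tau δ K A ≤ 1 := h.tau_le_one
  have hρsq : ρ^2 ≤ ρ/10 := by nlinarith
  rcases le_or_gt (1 - r) ρ with hcase | hcase
  · -- case B
    have hub : 1 - r*c ≤ (3/2)*ρ := by nlinarith
    have hl1 : Real.log (1 - r*c) ≤ Real.log ((3/2)*ρ) := Real.log_le_log hpos1 hub
    have hρe : ρ ≤ (2/3)*Real.exp (-(4*π+1)/K) := rho_le_exp
    have hl2 : Real.log ((3/2)*ρ) ≤ -(4*π+1)/K := by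
      rw [Real.log_le_iff_le_exp (by positivity)]
      linarith
    have hl3 : (0:ℝ) ≤ Real.log (1 + r*c) := Real.log_nonneg (by nlinarith)
    have hmul : K * (-(Real.log (1 - r*c))) ≥ K * ((4*π+1)/K) := by
      apply mul_le_mul_of_nonneg_left _ (le_of_lt hK)
      have : -((4*π+1)/K) = -(4*π+1)/K := by ring
      linarith [hl1.trans hl2]
    have hKK : K * ((4*π+1)/K) = 4*π+1 := by field_simp
    nlinarith [mul_le_mul_of_nonneg_left hl3 (le_of_lt hK)]
  · -- case A
    have hcase' : ρ ≤ 1 - r := le_of_lt hcase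
    have hr4 : (0:ℝ) < 1 - r/4 := by linarith
    have h1r : (0:ℝ) < 1 - r := by linarith
    have hA1 : r*(1-c) ≤ ρ^2/2 := by
      have : r*(1-c) ≤ 1*(1-c) := mul_le_mul_of_nonneg_right hr1.le (by linarith)
      linarith
    have hA2 : ρ^2 ≤ ρ*(1-r) := by
      have := mul_le_mul_of_nonneg_left hcase' hρ0.le
      nlinarith
    have key : r*(1-c) ≤ (1-r)*ρ/2 := by nlinarith
    have hdown : 1 - r*c ≤ (1-r)*(1+ρ/2) := by nlinarith [key]
    have hup : (1+r)*(1-ρ^2/2) ≤ 1 + r*c := by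
      nlinarith [mul_nonneg hr0.le (sq_nonneg ρ), hA1]
    have hup2 : (1-r/4)*(1+fK K) ≤ 1+r := by
      nlinarith [mul_nonneg hr0.le hf0.le]
    have hx0 : (0:ℝ) < 1 - ρ^2/2 := by linarith
    have hl1 : Real.log ((1+r)*(1-ρ^2/2)) ≤ Real.log (1 + r*c) :=
      Real.log_le_log (by positivity) hup
    rw [Real.log_mul (by positivity) (ne_of_gt hx0)] at hl1
    have hl2 : Real.log (1 - r*c) ≤ Real.log (1-r) + Real.log (1+ρ/2) := by
      have := Real.log_le_log hpos1 hdown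
      rwa [Real.log_mul (ne_of_gt h1r) (by positivity)] at this
    have hl3 : Real.log (1-r/4) + Real.log (1+fK K) ≤ Real.log (1+r) := by
      have := Real.log_le_log (by positivity) hup2
      rwa [Real.log_mul (ne_of_gt hr4) (by positivity)] at this
    have hl4 : -(ρ/2) ≤ Real.log (1-ρ^2/2) := by
      have hinv : Real.log (1-ρ^2/2)⁻¹ ≤ (1-ρ^2/2)⁻¹ - 1 :=
        Real.log_le_sub_one_of_pos (by positivity)
      rw [Real.log_inv] at hinv
      have hinv2 : (1-ρ^2/2)⁻¹ - 1 ≤ ρ^2 := by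
        rw [inv_eq_one_div, div_sub' (ne_of_gt hx0)]
        rw [div_le_iff₀ hx0]
        nlinarith
      nlinarith
    have hl5 : Real.log (1+ρ/2) ≤ ρ/2 := by
      have := Real.log_le_sub_one_of_pos (by positivity : (0:ℝ) < 1+ρ/2)
      linarith
    have h4pi := h.hyp4pi
    rw [← hrdef] at h4pi
    have hlf : ρ ≤ Real.log (1 + fK K)/2 := rho_le_log
    have hsum : 4*π/K + Real.log (1 + fK K)/2 ≤
        Real.log (1 + r*c) - Real.log (1 - r*c) := by linarith
    have hmul := mul_le_mul_of_nonneg_left hsum (le_of_lt hK)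
    have hKK : K * (4*π/K) = 4*π := by field_simp
    have htau2 : tau δ K A ≤ K * Real.log (1 + fK K)/2 :=
      le_trans h.tau_le_tau0 (min_le_right _ _)
    rw [mul_add, hKK] at hmul
    linarith

end Hyp
end WBounds

section Calc1
variable {δ K A lam : ℝ}

lemma abs_sin_sub_sin (a b : ℝ) : |Real.sin a - Real.sin b| ≤ |a - b| := by
  rw [Real.sin_sub_sin]
  have h1 : |Real.sin ((a-b)/2)| ≤ |(a-b)/2| := Real.abs_sin_le_abs
  have h2 : |Real.cos ((a+b)/2)| ≤ 1 := Real.abs_cos_le_one _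
  calc |2 * Real.sin ((a-b)/2) * Real.cos ((a+b)/2)|
      = 2 * |Real.sin ((a-b)/2)| * |Real.cos ((a+b)/2)| := by
        rw [abs_mul, abs_mul]; norm_num
    _ ≤ 2 * |(a-b)/2| * 1 := by
        apply mul_le_mul _ h2 (abs_nonneg _) (by positivity)
        exact mul_le_mul_of_nonneg_left h1 (by norm_num)
    _ = |a - b| := by
        rw [abs_div, abs_two]
        ring

namespace Hyp
variable (h : Hyp δ K A lam)
include h

lemma WY_pos {x Y : ℝ} (hx : x ∈ Set.Icc (lo K) (hi K)) (hY : Y ∈ Set.Icc 0 (eps δ A)) :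
    (rho K)^2/5 ≤ W0 A lam x + Y := by
  have := h.W0_ge hx
  linarith [hY.1]

lemma WY_le3 {x Y : ℝ} (hY : Y ∈ Set.Icc 0 (eps δ A)) :
    W0 A lam x + Y ≤ 3 := by
  have := h.W0_le x
  have := h.eps_le_one
  linarith [hY.2]

omit h in
lemma gg_hasDeriv {x Y : ℝ} (hne : W0 A lam x + Y ≠ 0) :
    HasDerivAt (fun z => gg K A lam Y z)
      (1 - K*((W0 A lam x + Y)⁻¹*(rr A lam*Real.cos x))) x := by
  have hW : HasDerivAt (fun z => W0 A lam z + Y) (rr A lam*Real.cos x) x := by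
    unfold W0
    exact (((Real.hasDerivAt_sin x).const_mul (rr A lam)).const_add 1).add_const Y
  have hlog : HasDerivAt (fun z => Real.log (W0 A lam z + Y))
      ((W0 A lam x + Y)⁻¹*(rr A lam*Real.cos x)) x := by
    have := (Real.hasDerivAt_log hne).comp x hW
    exact this
  have : HasDerivAt (fun z => z - K*Real.log A - K*Real.log (W0 A lam z + Y))
      (1 - K*((W0 A lam x + Y)⁻¹*(rr A lam*Real.cos x))) x :=
    ((hasDerivAt_id x).sub_const (K*Real.log A)).sub (hlog.const_mul K)
  exact this

lemma deriv_lower {x Y : ℝ} (hx : x ∈ Set.Icc (lo K) (hi K)) (hY : Y ∈ Set.Icc 0 (eps δ A)) :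
    1 + em K ≤ 1 - K*((W0 A lam x + Y)⁻¹*(rr A lam*Real.cos x)) := by
  have hK := h.hK
  have hρ := rho_pos hK
  have hWpos : 0 < W0 A lam x + Y := lt_of_lt_of_le (by positivity) (h.WY_pos hx hY)
  have hW3 : W0 A lam x + Y ≤ 3 := h.WY_le3 hY
  have hinv : (3:ℝ)⁻¹ ≤ (W0 A lam x + Y)⁻¹ := by
    apply inv_anti₀ hWpos hW3
  have hcos : Real.sin (rho K) ≤ -Real.cos x := neg_cos_lower hK hx
  have hsinρ : rho K/2 ≤ Real.sin (rho K) := sin_rho_ge hK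
  have hr : fK K < rr A lam := h.fK_lt_r
  have hf := fK_pos hK
  have hstep : K*(fK K*((rho K/2)*(3:ℝ)⁻¹)) ≤ K*(rr A lam*((-Real.cos x)*(W0 A lam x + Y)⁻¹)) := by
    apply mul_le_mul_of_nonneg_left _ (le_of_lt hK)
    apply mul_le_mul (le_of_lt hr) _ (by positivity) (by linarith)
    apply mul_le_mul (by linarith) hinv (by positivity) (by linarith)
  have hem : em K = K*(fK K*((rho K/2)*(3:ℝ)⁻¹)) := by rw [em]; ring
  have : K*((W0 A lam x + Y)⁻¹*(rr A lam*Real.cos x))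
      = -(K*(rr A lam*((-Real.cos x)*(W0 A lam x + Y)⁻¹))) := by ring
  rw [this]
  linarith [hstep, hem.symm.le]

lemma gg_expand {x1 x2 Y : ℝ} (hY : Y ∈ Set.Icc 0 (eps δ A))
    (h1 : x1 ∈ Set.Icc (lo K) (hi K)) (h2 : x2 ∈ Set.Icc (lo K) (hi K)) (hle : x1 ≤ x2) :
    (1 + em K)*(x2 - x1) ≤ gg K A lam Y x2 - gg K A lam Y x1 := by
  have hK := h.hK
  have hρ := rho_pos hK
  set φ := fun z => gg K A lam Y z - (1 + em K)*z with hφ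
  have hd : ∀ x ∈ Set.Icc (lo K) (hi K), HasDerivAt φ
      ((1 - K*((W0 A lam x + Y)⁻¹*(rr A lam*Real.cos x))) - (1 + em K)) x := by
    intro x hx
    have hne : W0 A lam x + Y ≠ 0 :=
      ne_of_gt (lt_of_lt_of_le (by positivity) (h.WY_pos hx hY))
    exact (gg_hasDeriv hne).sub ((hasDerivAt_id x).const_mul (1+em K) |>.congr_deriv (by ring))
  have hmono : MonotoneOn φ (Set.Icc (lo K) (hi K)) := by
    apply monotoneOn_of_deriv_nonneg (convex_Icc _ _)
    · intro x hx
      exact (hd x hx).continuousAt.continuousWithinAt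
    · intro x hx
      rw [interior_Icc] at hx
      exact ((hd x (Set.mem_Icc_of_Ioo hx)).differentiableAt).differentiableWithinAt
    · intro x hx
      rw [interior_Icc] at hx
      rw [(hd x (Set.mem_Icc_of_Ioo hx)).deriv]
      have := h.deriv_lower (Set.mem_Icc_of_Ioo hx) hY
      linarith
  have := hmono h1 h2 hle
  simp only [hφ] at this
  nlinarith

omit h in
lemma gg_sub_log {Y Y' x : ℝ} :
    gg K A lam Y' x - gg K A lam Y x
      = K*(Real.log (W0 A lam x + Y) - Real.log (W0 A lam x + Y')) := by
  unfold gg; ring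

omit h in
lemma log_diff_le {a b c : ℝ} (hc : 0 < c) (hca : c ≤ a) (hab : a ≤ b) :
    Real.log b - Real.log a ≤ (b - a)/c := by
  have ha : 0 < a := lt_of_lt_of_le hc hca
  have hb : 0 < b := lt_of_lt_of_le ha hab
  have h1 : Real.log b - Real.log a = Real.log (b/a) := by
    rw [Real.log_div (ne_of_gt hb) (ne_of_gt ha)]
  rw [h1]
  have h2 : Real.log (b/a) ≤ b/a - 1 := Real.log_le_sub_one_of_pos (by positivity)
  have h3 : b/a - 1 = (b-a)/a := by field_simp
  have h4 : (b-a)/a ≤ (b-a)/c := by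
    apply div_le_div_of_nonneg_left (by linarith) hc hca
  linarith

lemma wobble {x Y : ℝ} (hx : x ∈ Set.Icc (lo K) (hi K)) (hY : Y ∈ Set.Icc 0 (eps δ A)) :
    gg K A lam 0 x - tau δ K A ≤ gg K A lam Y x ∧ gg K A lam Y x ≤ gg K A lam 0 x := by
  have hK := h.hK
  have hρ := rho_pos hK
  have hW := h.W0_ge hx
  have hWmin : (0:ℝ) < (rho K)^2/5 := by positivity
  have heq : gg K A lam 0 x - gg K A lam Y x
      = K*(Real.log (W0 A lam x + Y) - Real.log (W0 A lam x + 0)) := gg_sub_log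
  constructor
  · have hlog : Real.log (W0 A lam x + Y) - Real.log (W0 A lam x + 0)
        ≤ (Y - 0)/((rho K)^2/5) := by
      have := log_diff_le hWmin (by linarith [hY.1] : (rho K)^2/5 ≤ W0 A lam x + 0)
        (by linarith [hY.1] : W0 A lam x + 0 ≤ W0 A lam x + Y)
      simpa using this
    have : gg K A lam 0 x - gg K A lam Y x ≤ K*(Y/((rho K)^2/5)) := by
      rw [heq]
      apply mul_le_mul_of_nonneg_left _ (le_of_lt hK)
      simpa using hlog
    have htau : K*(Y/((rho K)^2/5)) ≤ tau δ K A := by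
      have heq2 : K*(Y/((rho K)^2/5)) = 5*K*Y/(rho K)^2 := by
        field_simp
      rw [tau, heq2]
      gcongr
      exact hY.2
    linarith
  · rw [← sub_nonneg, heq]
    apply mul_nonneg (le_of_lt hK)
    rw [sub_nonneg]
    apply Real.log_le_log (by linarith [hY.1]) (by linarith [hY.1])

lemma gg_Y_lip {x Y Y' : ℝ} (hx : x ∈ Set.Icc (lo K) (hi K))
    (hY : Y ∈ Set.Icc 0 (eps δ A)) (hY' : Y' ∈ Set.Icc 0 (eps δ A)) :
    |gg K A lam Y x - gg K A lam Y' x| ≤ (5*K/(rho K)^2)*|Y - Y'| := by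
  have hK := h.hK
  have hρ := rho_pos hK
  have hW := h.W0_ge hx
  have hWmin : (0:ℝ) < (rho K)^2/5 := by positivity
  -- wlog Y' ≤ Y
  have main : ∀ Z Z' : ℝ, Z' ∈ Set.Icc 0 (eps δ A) → Z ∈ Set.Icc 0 (eps δ A) → Z' ≤ Z →
      gg K A lam Z' x - gg K A lam Z x ≤ (5*K/(rho K)^2)*(Z - Z') := by
    intro Z Z' hZ' hZ hle
    have heq : gg K A lam Z' x - gg K A lam Z x
        = K*(Real.log (W0 A lam x + Z) - Real.log (W0 A lam x + Z')) := gg_sub_log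
    have hlog := log_diff_le hWmin
      (by linarith [hZ'.1] : (rho K)^2/5 ≤ W0 A lam x + Z')
      (by linarith : W0 A lam x + Z' ≤ W0 A lam x + Z)
    rw [heq]
    have h2 : K*(Real.log (W0 A lam x + Z) - Real.log (W0 A lam x + Z'))
        ≤ K*((W0 A lam x + Z - (W0 A lam x + Z'))/((rho K)^2/5)) :=
      mul_le_mul_of_nonneg_left hlog (le_of_lt hK)
    calc K*(Real.log (W0 A lam x + Z) - Real.log (W0 A lam x + Z'))
        ≤ K*((W0 A lam x + Z - (W0 A lam x + Z'))/((rho K)^2/5)) := h2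
      _ = (5*K/(rho K)^2)*(Z - Z') := by field_simp; ring
  rcases le_total Y' Y with hle | hle
  · rw [abs_of_nonpos (by
      have := main Y Y' hY' hY hle
      have hmono : gg K A lam Y x ≤ gg K A lam Y' x := by
        have h1 := gg_sub_log (K:=K) (A:=A) (lam:=lam) (Y:=Y) (Y':=Y') (x:=x)
        nlinarith [Real.log_le_log (by linarith [hY'.1] : (0:ℝ) < W0 A lam x + Y')
          (by linarith : W0 A lam x + Y' ≤ W0 A lam x + Y), hK]
      linarith), abs_of_nonneg (by linarith : (0:ℝ) ≤ Y - Y')]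
    have := main Y Y' hY' hY hle
    linarith
  · rw [abs_of_nonneg (by
      have hmono : gg K A lam Y' x ≤ gg K A lam Y x := by
        have h1 := gg_sub_log (K:=K) (A:=A) (lam:=lam) (Y:=Y') (Y':=Y) (x:=x)
        nlinarith [Real.log_le_log (by linarith [hY.1] : (0:ℝ) < W0 A lam x + Y)
          (by linarith : W0 A lam x + Y ≤ W0 A lam x + Y'), hK]
      linarith), abs_of_nonpos (by linarith : Y - Y' ≤ 0)]
    have := main Y' Y hY hY' hle
    linarith

end Hyp
end Calc1

section QLemmas
variable {δ K A lam : ℝ}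

lemma rpow_diff {d w0 : ℝ} (hd : 1 < d) (hw0 : 0 < w0) {a b : ℝ}
    (ha : a ∈ Set.Icc w0 3) (hb : b ∈ Set.Icc w0 3) :
    |b^d - a^d| ≤ d*3^(d-1)*|b - a| := by
  have hder : ∀ x ∈ Set.Icc w0 3, HasDerivWithinAt (fun z : ℝ => z^d) (d*x^(d-1)) (Set.Icc w0 3) x := by
    intro x hx
    exact (Real.hasDerivAt_rpow_const (Or.inl (ne_of_gt (lt_of_lt_of_le hw0 hx.1)))).hasDerivWithinAt
  have hbound : ∀ x ∈ Set.Icc w0 3, ‖d*x^(d-1)‖ ≤ d*3^(d-1) := by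
    intro x hx
    have hx0 : (0:ℝ) ≤ x := le_trans (le_of_lt hw0) hx.1
    have h1 : x^(d-1) ≤ 3^(d-1) := Real.rpow_le_rpow hx0 hx.2 (by linarith)
    have h2 : (0:ℝ) ≤ x^(d-1) := Real.rpow_nonneg hx0 _
    rw [Real.norm_eq_abs, abs_of_nonneg (by positivity)]
    nlinarith
  have := Convex.norm_image_sub_le_of_norm_hasDerivWithin_le hder hbound (convex_Icc _ _) ha hb
  simpa [Real.norm_eq_abs] using this

namespace Hyp
variable (h : Hyp δ K A lam)
include h

lemma qq_mem {x Y : ℝ} (hx : x ∈ Set.Icc (lo K) (hi K)) (hY : Y ∈ Set.Icc 0 (eps δ A)) :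
    qq δ A lam x Y ∈ Set.Icc 0 (eps δ A) := by
  have hA := h.hA
  have hδ1 : (0:ℝ) ≤ δ - 1 := by linarith [h.hδ]
  have hρ := rho_pos h.hK
  have hWpos : (0:ℝ) < W0 A lam x + Y := lt_of_lt_of_le (by positivity) (h.WY_pos hx hY)
  constructor
  · apply mul_nonneg (Real.rpow_nonneg hA.le _) (Real.rpow_nonneg hWpos.le _)
  · rw [eps]
    have h1 : (W0 A lam x + Y)^δ ≤ 3^δ :=
      Real.rpow_le_rpow hWpos.le (h.WY_le3 hY) (by linarith [h.hδ])
    calc qq δ A lam x Y = A^(δ-1) * (W0 A lam x + Y)^δ := rfl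
      _ ≤ A^(δ-1) * 3^δ := mul_le_mul_of_nonneg_left h1 (Real.rpow_nonneg hA.le _)
      _ = 3^δ * A^(δ-1) := by ring

lemma qq_lip {x x' Y Y' : ℝ} (hx : x ∈ Set.Icc (lo K) (hi K)) (hx' : x' ∈ Set.Icc (lo K) (hi K))
    (hY : Y ∈ Set.Icc 0 (eps δ A)) (hY' : Y' ∈ Set.Icc 0 (eps δ A)) :
    |qq δ A lam x Y - qq δ A lam x' Y'| ≤ kap δ A * (|x - x'| + |Y - Y'|) := by
  have hA := h.hA
  have hρ := rho_pos h.hK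
  have hWm : (0:ℝ) < (rho K)^2/5 := by positivity
  have hmem : W0 A lam x + Y ∈ Set.Icc ((rho K)^2/5) 3 := ⟨h.WY_pos hx hY, h.WY_le3 hY⟩
  have hmem' : W0 A lam x' + Y' ∈ Set.Icc ((rho K)^2/5) 3 := ⟨h.WY_pos hx' hY', h.WY_le3 hY'⟩
  have hdiff := rpow_diff h.hδ hWm hmem' hmem
  have hWd : |(W0 A lam x + Y) - (W0 A lam x' + Y')| ≤ |x - x'| + |Y - Y'| := by
    have h1 : (W0 A lam x + Y) - (W0 A lam x' + Y')
        = rr A lam * (Real.sin x - Real.sin x') + (Y - Y') := by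
      unfold W0; ring
    rw [h1]
    have h2 : |rr A lam * (Real.sin x - Real.sin x')| ≤ |x - x'| := by
      rw [abs_mul, abs_of_pos h.r_pos]
      calc rr A lam * |Real.sin x - Real.sin x'| ≤ 1 * |x - x'| := by
            apply mul_le_mul h.r_lt_one.le (abs_sin_sub_sin _ _) (abs_nonneg _) zero_le_one
        _ = |x - x'| := by ring
    calc |rr A lam * (Real.sin x - Real.sin x') + (Y - Y')|
        ≤ |rr A lam * (Real.sin x - Real.sin x')| + |Y - Y'| := abs_add_le _ _
      _ ≤ |x - x'| + |Y - Y'| := by linarith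
  have heq : qq δ A lam x Y - qq δ A lam x' Y'
      = A^(δ-1) * ((W0 A lam x + Y)^δ - (W0 A lam x' + Y')^δ) := by
    unfold qq; ring
  rw [heq, abs_mul, abs_of_nonneg (Real.rpow_nonneg hA.le _)]
  have hd3 : (0:ℝ) ≤ δ*3^(δ-1) := by
    have : (0:ℝ) < δ := by linarith [h.hδ]
    positivity
  calc A^(δ-1) * |(W0 A lam x + Y)^δ - (W0 A lam x' + Y')^δ|
      ≤ A^(δ-1) * (δ*3^(δ-1)*(|x - x'| + |Y - Y'|)) := by
        apply mul_le_mul_of_nonneg_left _ (Real.rpow_nonneg hA.le _)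
        calc |(W0 A lam x + Y)^δ - (W0 A lam x' + Y')^δ|
            ≤ δ*3^(δ-1)*|(W0 A lam x + Y) - (W0 A lam x' + Y')| := hdiff
          _ ≤ δ*3^(δ-1)*(|x - x'| + |Y - Y'|) := mul_le_mul_of_nonneg_left hWd hd3
    _ = kap δ A * (|x - x'| + |Y - Y'|) := by rw [kap]; ring

lemma qq_injW {x x' Y Y' : ℝ} (hx : x ∈ Set.Icc (lo K) (hi K)) (hx' : x' ∈ Set.Icc (lo K) (hi K))
    (hY : Y ∈ Set.Icc 0 (eps δ A)) (hY' : Y' ∈ Set.Icc 0 (eps δ A))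
    (heq : qq δ A lam x Y = qq δ A lam x' Y') : W0 A lam x + Y = W0 A lam x' + Y' := by
  have hA := h.hA
  have hρ := rho_pos h.hK
  have hW : (0:ℝ) < W0 A lam x + Y := lt_of_lt_of_le (by positivity) (h.WY_pos hx hY)
  have hW' : (0:ℝ) < W0 A lam x' + Y' := lt_of_lt_of_le (by positivity) (h.WY_pos hx' hY')
  have hδ0 : (0:ℝ) < δ := by linarith [h.hδ]
  have hApow : (0:ℝ) < A^(δ-1) := Real.rpow_pos_of_pos hA _
  have heq2 : (W0 A lam x + Y)^δ = (W0 A lam x' + Y')^δ :=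
    mul_left_cancel₀ (ne_of_gt hApow) heq
  by_contra hne
  rcases lt_or_gt_of_ne hne with hlt | hlt
  · have := Real.rpow_lt_rpow hW.le hlt hδ0
    rw [heq2] at this; exact lt_irrefl _ this
  · have := Real.rpow_lt_rpow hW'.le hlt hδ0
    rw [heq2] at this; exact lt_irrefl _ this

end Hyp
end QLemmas

section Windows
variable {δ K A lam : ℝ}

structure Win where
  a : Bool → ℝ
  b : Bool → ℝ
  j : Bool → ℤ

structure WinOK (δ K A lam : ℝ) (w : Win) : Prop where
  mem_a : ∀ i, w.a i ∈ Set.Icc (lo K) (hi K)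
  mem_b : ∀ i, w.b i ∈ Set.Icc (lo K) (hi K)
  ab : ∀ i, w.a i ≤ w.b i
  disj : w.b false < w.a true
  jne : w.j false ≠ w.j true
  ga : ∀ i, gg K A lam 0 (w.a i) = lo K + 2*π*(w.j i)
  gb : ∀ i, gg K A lam 0 (w.b i) = hi K + 2*π*(w.j i) + tau δ K A

namespace Hyp
variable (h : Hyp δ K A lam)
include h

lemma zero_mem_eps : (0:ℝ) ∈ Set.Icc (0:ℝ) (eps δ A) := by
  exact ⟨le_refl _, h.eps_pos.le⟩

lemma gg_contOn (Y : ℝ) (hY : Y ∈ Set.Icc 0 (eps δ A)) :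
    ContinuousOn (gg K A lam Y) (Set.Icc (lo K) (hi K)) := by
  intro x hx
  have hρ := rho_pos h.hK
  have hne : W0 A lam x + Y ≠ 0 :=
    ne_of_gt (lt_of_lt_of_le (by positivity) (h.WY_pos hx hY))
  exact (gg_hasDeriv hne).continuousAt.continuousWithinAt

lemma gg_strictMono {Y x1 x2 : ℝ} (hY : Y ∈ Set.Icc 0 (eps δ A))
    (h1 : x1 ∈ Set.Icc (lo K) (hi K)) (h2 : x2 ∈ Set.Icc (lo K) (hi K)) (hlt : x1 < x2) :
    gg K A lam Y x1 < gg K A lam Y x2 := by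
  have := h.gg_expand hY h1 h2 hlt.le
  have hm := em_pos h.hK
  nlinarith

lemma gg_mono_rev {Y x1 x2 : ℝ} (hY : Y ∈ Set.Icc 0 (eps δ A))
    (h1 : x1 ∈ Set.Icc (lo K) (hi K)) (h2 : x2 ∈ Set.Icc (lo K) (hi K))
    (hlt : gg K A lam Y x1 < gg K A lam Y x2) : x1 < x2 := by
  by_contra hc
  push_neg at hc
  rcases eq_or_lt_of_le hc with heq | hlt2
  · rw [heq] at hlt; exact lt_irrefl _ hlt
  · exact absurd (h.gg_strictMono hY h2 h1 hlt2) (by linarith)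

lemma lo_lt_hi : lo K < hi K := by
  have := rho_le_tenth (K := K)
  have := pi_gt_three
  rw [lo, hi]; linarith

lemma Gclimb : gg K A lam 0 (hi K) - gg K A lam 0 (lo K)
    = (hi K - lo K) + K*(Real.log (1 + rr A lam * Real.cos (rho K))
        - Real.log (1 - rr A lam * Real.cos (rho K))) := by
  have hsinlo : Real.sin (lo K) = Real.cos (rho K) := by
    rw [lo, add_comm]; exact Real.sin_add_pi_div_two _
  have hsinhi : Real.sin (hi K) = -Real.cos (rho K) := by
    have : hi K = (π - rho K) + π/2 := by rw [hi]; ring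
    rw [this, Real.sin_add_pi_div_two, Real.cos_pi_sub]
  unfold gg W0
  rw [hsinlo, hsinhi]
  ring_nf

lemma Gclimb_ge : gg K A lam 0 (lo K) + (hi K - lo K) + 4*π + tau δ K A
    ≤ gg K A lam 0 (hi K) := by
  have h1 := h.Gclimb
  have h2 := h.climb
  linarith

lemma exists_win : ∃ w : Win, WinOK δ K A lam w := by
  have hK := h.hK
  have hπ : (0:ℝ) < 2*π := by positivity
  set G := gg K A lam 0 with hG
  set j0 : ℤ := ⌈(G (lo K) - lo K)/(2*π)⌉ with hj0
  have hj0ge : G (lo K) - lo K ≤ 2*π*j0 := by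
    have := Int.le_ceil ((G (lo K) - lo K)/(2*π))
    calc G (lo K) - lo K = ((G (lo K) - lo K)/(2*π))*(2*π) := by field_simp
      _ ≤ (j0:ℝ)*(2*π) := by
          apply mul_le_mul_of_nonneg_right this (le_of_lt hπ)
      _ = 2*π*j0 := by ring
  have hj0lt : 2*π*j0 < G (lo K) - lo K + 2*π := by
    have := Int.ceil_lt_add_one ((G (lo K) - lo K)/(2*π))
    calc 2*π*(j0:ℝ) = ((j0:ℝ))*(2*π) := by ring
      _ < ((G (lo K) - lo K)/(2*π) + 1)*(2*π) := by
          apply mul_lt_mul_of_pos_right this hπ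
      _ = G (lo K) - lo K + 2*π := by field_simp
  have hτ0 := h.tau_pos
  have hτ1 := h.tau_le_one
  have hhl := h.lo_lt_hi
  have hhl2 : hi K - lo K < π := by
    rw [lo, hi]; have := rho_pos hK; linarith
  -- the four target values
  set v1 := lo K + 2*π*(j0:ℝ) with hv1
  set v2 := hi K + 2*π*(j0:ℝ) + tau δ K A with hv2
  set v3 := lo K + 2*π*((j0:ℝ)+1) with hv3
  set v4 := hi K + 2*π*((j0:ℝ)+1) + tau δ K A with hv4
  have hπ3 := pi_gt_three
  have hv12 : v1 < v2 := by rw [hv1, hv2]; linarith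
  have hv23 : v2 < v3 := by rw [hv2, hv3]; linarith
  have hv34 : v3 < v4 := by rw [hv3, hv4]; linarith
  have hGlo_v1 : G (lo K) ≤ v1 := by rw [hv1]; linarith
  have hv4_Ghi : v4 ≤ G (hi K) := by
    have := h.Gclimb_ge
    rw [hv4]; rw [← hG] at this; linarith
  have hIVT := intermediate_value_Icc hhl.le (h.gg_contOn 0 h.zero_mem_eps)
  have hm1 : v1 ∈ Set.Icc (G (lo K)) (G (hi K)) := ⟨hGlo_v1, by linarith⟩
  have hm2 : v2 ∈ Set.Icc (G (lo K)) (G (hi K)) := ⟨by linarith, by linarith⟩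
  have hm3 : v3 ∈ Set.Icc (G (lo K)) (G (hi K)) := ⟨by linarith, by linarith⟩
  have hm4 : v4 ∈ Set.Icc (G (lo K)) (G (hi K)) := ⟨by linarith, by linarith⟩
  obtain ⟨a0, ha0m, ha0⟩ := hIVT hm1
  obtain ⟨b0, hb0m, hb0⟩ := hIVT hm2
  obtain ⟨a1, ha1m, ha1⟩ := hIVT hm3
  obtain ⟨b1, hb1m, hb1⟩ := hIVT hm4
  refine ⟨⟨fun i => if i then a1 else a0, fun i => if i then b1 else b0,
    fun i => if i then j0+1 else j0⟩, ?_, ?_, ?_, ?_, ?_, ?_, ?_⟩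
  · intro i; cases i <;> simpa
  · intro i; cases i <;> simpa
  · intro i
    cases i <;> simp only [Bool.false_eq_true, if_false, if_true]
    · by_contra hc
      push_neg at hc
      have := h.gg_strictMono h.zero_mem_eps hb0m ha0m hc
      rw [ha0, hb0] at this
      linarith
    · by_contra hc
      push_neg at hc
      have := h.gg_strictMono h.zero_mem_eps hb1m ha1m hc
      rw [ha1, hb1] at this
      linarith
  · simp only [Bool.false_eq_true, if_false, if_true]
    apply h.gg_mono_rev h.zero_mem_eps hb0m ha1m
    rw [hb0, ha1]; linarith
  · simp only [Bool.false_eq_true, if_false, if_true]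
    intro hc
    omega
  · intro i
    cases i <;> simp only [Bool.false_eq_true, if_false, if_true]
    · rw [ha0]
    · rw [ha1, hv3]; push_cast; ring
  · intro i
    cases i <;> simp only [Bool.false_eq_true, if_false, if_true]
    · rw [hb0]
    · rw [hb1, hv4]; push_cast; ring

end Hyp
end Windows

section Dyn1
variable {δ K A lam : ℝ} {w : Win}

open Classical in
def hinv (K A lam : ℝ) (w : Win) (i : Bool) (t Y : ℝ) : ℝ :=
  if H : ∃ ξ ∈ Set.Icc (w.a i) (w.b i), gg K A lam Y ξ = t + 2*π*(w.j i) then H.choose else w.a i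

lemma win_subset (hw : WinOK δ K A lam w) (i : Bool) :
    Set.Icc (w.a i) (w.b i) ⊆ Set.Icc (lo K) (hi K) := by
  intro x hx
  exact ⟨le_trans (hw.mem_a i).1 hx.1, le_trans hx.2 (hw.mem_b i).2⟩

namespace Hyp
variable (h : Hyp δ K A lam)
include h

lemma hinv_spec (hw : WinOK δ K A lam w) (i : Bool) {t Y : ℝ}
    (ht : t ∈ Set.Icc (lo K) (hi K)) (hY : Y ∈ Set.Icc 0 (eps δ A)) :
    hinv K A lam w i t Y ∈ Set.Icc (w.a i) (w.b i) ∧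
      gg K A lam Y (hinv K A lam w i t Y) = t + 2*π*(w.j i) := by
  have hcov1 : gg K A lam Y (w.a i) ≤ t + 2*π*(w.j i) := by
    have h1 := (h.wobble (hw.mem_a i) hY).2
    rw [hw.ga i] at h1
    linarith [ht.1]
  have hcov2 : t + 2*π*(w.j i) ≤ gg K A lam Y (w.b i) := by
    have h1 := (h.wobble (hw.mem_b i) hY).1
    rw [hw.gb i] at h1
    linarith [ht.2]
  have hIVT := intermediate_value_Icc (hw.ab i)
    ((h.gg_contOn Y hY).mono (win_subset hw i))
  have hmem : t + 2*π*(w.j i) ∈ Set.Icc (gg K A lam Y (w.a i)) (gg K A lam Y (w.b i)) :=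
    ⟨hcov1, hcov2⟩
  obtain ⟨ξ, hξm, hξ⟩ := hIVT hmem
  have H : ∃ ξ ∈ Set.Icc (w.a i) (w.b i), gg K A lam Y ξ = t + 2*π*(w.j i) := ⟨ξ, hξm, hξ⟩
  have heq : hinv K A lam w i t Y = H.choose := by unfold hinv; exact dif_pos H
  rw [heq]
  exact ⟨H.choose_spec.1, H.choose_spec.2⟩

-- core contraction estimate for the inverse branch
lemma step_theta (hw : WinOK δ K A lam w) (i : Bool) {θ θ' t t' Y Y' : ℝ}
    (hθ : θ ∈ Set.Icc (w.a i) (w.b i)) (hθ' : θ' ∈ Set.Icc (w.a i) (w.b i))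
    (hY : Y ∈ Set.Icc 0 (eps δ A)) (hY' : Y' ∈ Set.Icc 0 (eps δ A))
    (hgg : gg K A lam Y θ = t + 2*π*(w.j i)) (hgg' : gg K A lam Y' θ' = t' + 2*π*(w.j i)) :
    |θ - θ'| ≤ beta K * |t - t'| + PP K * |Y - Y'| := by
  have hK := h.hK
  have hem := em_pos h.hK
  have hθr := win_subset hw i hθ
  have hθr' := win_subset hw i hθ'
  -- expansion lower bound on |gg Y θ - gg Y θ'|
  have hexp : (1 + em K) * |θ - θ'| ≤ |gg K A lam Y θ - gg K A lam Y θ'| := by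
    rcases le_total θ' θ with hle | hle
    · have := h.gg_expand hY hθr' hθr hle
      rw [abs_of_nonneg (by linarith), abs_of_nonneg (by nlinarith)]
      linarith
    · have := h.gg_expand hY hθr hθr' hle
      rw [abs_of_nonpos (by linarith), abs_of_nonpos (by nlinarith)]
      linarith
  have hYlip : |gg K A lam Y θ' - gg K A lam Y' θ'| ≤ (5*K/(rho K)^2)*|Y - Y'| :=
    h.gg_Y_lip hθr' hY hY'
  have htri : |gg K A lam Y θ - gg K A lam Y θ'| ≤ |t - t'| + (5*K/(rho K)^2)*|Y - Y'| := by
    have heq : gg K A lam Y θ - gg K A lam Y θ'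
        = (t - t') + (gg K A lam Y' θ' - gg K A lam Y θ') := by
      rw [hgg, hgg']; ring
    rw [heq]
    calc |(t - t') + (gg K A lam Y' θ' - gg K A lam Y θ')|
        ≤ |t - t'| + |gg K A lam Y' θ' - gg K A lam Y θ'| := abs_add_le _ _
      _ ≤ |t - t'| + (5*K/(rho K)^2)*|Y - Y'| := by
          rw [abs_sub_comm (gg K A lam Y' θ')] at *
          linarith
  have hcomb : (1 + em K) * |θ - θ'| ≤ |t - t'| + (5*K/(rho K)^2)*|Y - Y'| :=
    le_trans hexp htri
  have hβ : beta K * (1 + em K) = 1 := by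
    rw [beta]; field_simp
  have hβpos := beta_pos h.hK
  have hPP : PP K = 5*K/(rho K)^2 := rfl
  calc |θ - θ'| = beta K * ((1 + em K) * |θ - θ'|) := by
        rw [← mul_assoc, hβ, one_mul]
    _ ≤ beta K * (|t - t'| + (5*K/(rho K)^2)*|Y - Y'|) :=
        mul_le_mul_of_nonneg_left hcomb hβpos.le
    _ ≤ beta K * |t - t'| + PP K * |Y - Y'| := by
        rw [mul_add, hPP]
        have hb1 : beta K ≤ 1 := (beta_lt_one h.hK).le
        have : beta K * ((5*K/(rho K)^2)*|Y - Y'|) ≤ 1 * ((5*K/(rho K)^2)*|Y - Y'|) := by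
          apply mul_le_mul_of_nonneg_right hb1
          have hρ := rho_pos h.hK
          positivity
        linarith

-- upper Lipschitz bound of gg in x (for continuity arguments)
lemma gg_x_lip {Y x x' : ℝ} (hY : Y ∈ Set.Icc 0 (eps δ A))
    (hx : x ∈ Set.Icc (lo K) (hi K)) (hx' : x' ∈ Set.Icc (lo K) (hi K)) :
    |gg K A lam Y x - gg K A lam Y x'| ≤ (1 + 5*K/(rho K)^2)*|x - x'| := by
  have hK := h.hK
  have hρ := rho_pos h.hK
  have hder : ∀ z ∈ Set.Icc (lo K) (hi K), HasDerivWithinAt (gg K A lam Y)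
      (1 - K*((W0 A lam z + Y)⁻¹*(rr A lam*Real.cos z))) (Set.Icc (lo K) (hi K)) z := by
    intro z hz
    have hne : W0 A lam z + Y ≠ 0 :=
      ne_of_gt (lt_of_lt_of_le (by positivity) (h.WY_pos hz hY))
    exact (gg_hasDeriv hne).hasDerivWithinAt
  have hbound : ∀ z ∈ Set.Icc (lo K) (hi K),
      ‖1 - K*((W0 A lam z + Y)⁻¹*(rr A lam*Real.cos z))‖ ≤ 1 + 5*K/(rho K)^2 := by
    intro z hz
    have hWpos : (0:ℝ) < W0 A lam z + Y := lt_of_lt_of_le (by positivity) (h.WY_pos hz hY)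
    have hWge : (rho K)^2/5 ≤ W0 A lam z + Y := h.WY_pos hz hY
    have hinvW : (W0 A lam z + Y)⁻¹ ≤ 5/(rho K)^2 := by
      have h5 : (0:ℝ) < (rho K)^2/5 := by positivity
      have h6 := inv_anti₀ h5 hWge
      have h7 : ((rho K)^2/5)⁻¹ = 5/(rho K)^2 := by rw [inv_div]
      linarith
    have hrc : |rr A lam*Real.cos z| ≤ 1 := by
      rw [abs_mul, abs_of_pos h.r_pos]
      nlinarith [Real.abs_cos_le_one z, h.r_lt_one, h.r_pos, abs_nonneg (Real.cos z)]
    have h2 : |K*((W0 A lam z + Y)⁻¹*(rr A lam*Real.cos z))| ≤ 5*K/(rho K)^2 := by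
      rw [abs_mul, abs_of_pos hK, abs_mul, abs_of_pos (inv_pos.mpr hWpos)]
      have h3 : (W0 A lam z + Y)⁻¹*|rr A lam*Real.cos z| ≤ (5/(rho K)^2)*1 :=
        mul_le_mul hinvW hrc (abs_nonneg _) (by positivity)
      calc K*((W0 A lam z + Y)⁻¹*|rr A lam*Real.cos z|) ≤ K*((5/(rho K)^2)*1) :=
            mul_le_mul_of_nonneg_left h3 hK.le
        _ = 5*K/(rho K)^2 := by ring
    rw [Real.norm_eq_abs, sub_eq_add_neg]
    have h4 := abs_add_le (1:ℝ) (-(K*((W0 A lam z + Y)⁻¹*(rr A lam*Real.cos z))))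
    rw [abs_one, abs_neg] at h4
    linarith
  have := Convex.norm_image_sub_le_of_norm_hasDerivWithin_le hder hbound (convex_Icc _ _) hx' hx
  simpa [Real.norm_eq_abs] using this

end Hyp
end Dyn1

section Dyn2
variable {δ K A lam : ℝ} {w : Win}

def Ok (δ K A lam : ℝ) (w : Win) (s : ℤ → Bool) (u : (ℤ → ℝ) × (ℤ → ℝ)) : Prop :=
  (∀ n, u.1 n ∈ Set.Icc (w.a (s n)) (w.b (s n))) ∧ (∀ n, u.2 n ∈ Set.Icc 0 (eps δ A))

def Good (δ K A lam : ℝ) (w : Win) (s : ℤ → Bool) (u : (ℤ → ℝ) × (ℤ → ℝ)) : Prop :=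
  Ok δ K A lam w s u ∧
  (∀ n, u.2 (n+1) = qq δ A lam (u.1 n) (u.2 n)) ∧
  (∀ n, gg K A lam (u.2 n) (u.1 n) = u.1 (n+1) + 2*π*(w.j (s n)))

def Tmap (δ K A lam : ℝ) (w : Win) (s : ℤ → Bool) (u : (ℤ → ℝ) × (ℤ → ℝ)) :
    (ℤ → ℝ) × (ℤ → ℝ) :=
  (fun n => hinv K A lam w (s n) (u.1 (n+1)) (qq δ A lam (u.1 (n-1)) (u.2 (n-1))),
   fun n => qq δ A lam (u.1 (n-1)) (u.2 (n-1)))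

def Dd (K : ℝ) (u v : (ℤ → ℝ) × (ℤ → ℝ)) (n : ℤ) : ℝ :=
  max |u.1 n - v.1 n| (MM K * |u.2 n - v.2 n|)

lemma Dd_nonneg {u v : (ℤ → ℝ) × (ℤ → ℝ)} {n : ℤ} : 0 ≤ Dd K u v n :=
  le_trans (abs_nonneg _) (le_max_left _ _)

lemma Dd_theta {u v : (ℤ → ℝ) × (ℤ → ℝ)} {n : ℤ} : |u.1 n - v.1 n| ≤ Dd K u v n :=
  le_max_left _ _

lemma Dd_Y {u v : (ℤ → ℝ) × (ℤ → ℝ)} {n : ℤ} : MM K * |u.2 n - v.2 n| ≤ Dd K u v n :=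
  le_max_right _ _

lemma Dd_Y' {u v : (ℤ → ℝ) × (ℤ → ℝ)} {n : ℤ} : |u.2 n - v.2 n| ≤ Dd K u v n := by
  have h1 := Dd_Y (K:=K) (u:=u) (v:=v) (n:=n)
  have h2 : 1*|u.2 n - v.2 n| ≤ MM K * |u.2 n - v.2 n| :=
    mul_le_mul_of_nonneg_right (MM_ge_one) (abs_nonneg _)
  linarith

lemma Dd_symm {u v : (ℤ → ℝ) × (ℤ → ℝ)} {n : ℤ} : Dd K u v n = Dd K v u n := by
  unfold Dd; rw [abs_sub_comm, abs_sub_comm (u.2 n)]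

namespace Hyp
variable (h : Hyp δ K A lam)
include h

lemma theta_mem_region (hw : WinOK δ K A lam w) {s : ℤ → Bool} {u : (ℤ → ℝ) × (ℤ → ℝ)}
    (hu : Ok δ K A lam w s u) (n : ℤ) : u.1 n ∈ Set.Icc (lo K) (hi K) :=
  win_subset hw (s n) (hu.1 n)

lemma Tmap_ok (hw : WinOK δ K A lam w) {s : ℤ → Bool} {u : (ℤ → ℝ) × (ℤ → ℝ)}
    (hu : Ok δ K A lam w s u) : Ok δ K A lam w s (Tmap δ K A lam w s u) := by
  constructor
  · intro n
    exact (h.hinv_spec hw (s n) (h.theta_mem_region hw hu (n+1))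
      (h.qq_mem (h.theta_mem_region hw hu (n-1)) (hu.2 (n-1)))).1
  · intro n
    exact h.qq_mem (h.theta_mem_region hw hu (n-1)) (hu.2 (n-1))

lemma TY_step (hw : WinOK δ K A lam w) {s : ℤ → Bool} {u v : (ℤ → ℝ) × (ℤ → ℝ)}
    (hu : Ok δ K A lam w s u) (hv : Ok δ K A lam w s v) (n : ℤ) :
    |(Tmap δ K A lam w s u).2 n - (Tmap δ K A lam w s v).2 n|
      ≤ 2 * kap δ A * Dd K u v (n-1) := by
  have hlip := h.qq_lip (h.theta_mem_region hw hu (n-1)) (h.theta_mem_region hw hv (n-1))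
    (hu.2 (n-1)) (hv.2 (n-1))
  have hκ := h.kap_pos
  have h1 : |u.1 (n-1) - v.1 (n-1)| ≤ Dd K u v (n-1) := Dd_theta
  have h2 : |u.2 (n-1) - v.2 (n-1)| ≤ Dd K u v (n-1) := Dd_Y'
  calc |(Tmap δ K A lam w s u).2 n - (Tmap δ K A lam w s v).2 n|
      = |qq δ A lam (u.1 (n-1)) (u.2 (n-1)) - qq δ A lam (v.1 (n-1)) (v.2 (n-1))| := rfl
    _ ≤ kap δ A * (|u.1 (n-1) - v.1 (n-1)| + |u.2 (n-1) - v.2 (n-1)|) := hlip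
    _ ≤ kap δ A * (Dd K u v (n-1) + Dd K u v (n-1)) := by
        apply mul_le_mul_of_nonneg_left _ hκ.le
        linarith
    _ = 2 * kap δ A * Dd K u v (n-1) := by ring

lemma TY_step_w (hw : WinOK δ K A lam w) {s : ℤ → Bool} {u v : (ℤ → ℝ) × (ℤ → ℝ)}
    (hu : Ok δ K A lam w s u) (hv : Ok δ K A lam w s v) (n : ℤ) :
    MM K * |(Tmap δ K A lam w s u).2 n - (Tmap δ K A lam w s v).2 n|
      ≤ gam K * Dd K u v (n-1) := by
  have h1 := h.TY_step hw hu hv n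
  have h2 : MM K * |(Tmap δ K A lam w s u).2 n - (Tmap δ K A lam w s v).2 n|
      ≤ MM K * (2 * kap δ A * Dd K u v (n-1)) :=
    mul_le_mul_of_nonneg_left h1 (le_trans zero_le_one MM_ge_one)
  have h3 : MM K * (2 * kap δ A * Dd K u v (n-1)) ≤ gam K * Dd K u v (n-1) := by
    have hκ1 := h.kap_le1
    have hM := MM_pos (K := K)
    have hD : (0:ℝ) ≤ Dd K u v (n-1) := Dd_nonneg
    have : MM K * (2 * kap δ A) ≤ gam K := by
      rw [le_div_iff₀ (by positivity : (0:ℝ) < 2*MM K)] at hκ1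
      calc MM K * (2*kap δ A) = kap δ A * (2*MM K) := by ring
        _ ≤ gam K := hκ1
    calc MM K * (2 * kap δ A * Dd K u v (n-1)) = (MM K * (2 * kap δ A)) * Dd K u v (n-1) := by ring
      _ ≤ gam K * Dd K u v (n-1) := mul_le_mul_of_nonneg_right this hD
  linarith

lemma Ttheta_step (hw : WinOK δ K A lam w) {s : ℤ → Bool} {u v : (ℤ → ℝ) × (ℤ → ℝ)}
    (hu : Ok δ K A lam w s u) (hv : Ok δ K A lam w s v) (n : ℤ) :
    |(Tmap δ K A lam w s u).1 n - (Tmap δ K A lam w s v).1 n|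
      ≤ gam K * max (Dd K u v (n-1)) (Dd K u v (n+1)) := by
  have hYu : qq δ A lam (u.1 (n-1)) (u.2 (n-1)) ∈ Set.Icc 0 (eps δ A) :=
    h.qq_mem (h.theta_mem_region hw hu (n-1)) (hu.2 (n-1))
  have hYv : qq δ A lam (v.1 (n-1)) (v.2 (n-1)) ∈ Set.Icc 0 (eps δ A) :=
    h.qq_mem (h.theta_mem_region hw hv (n-1)) (hv.2 (n-1))
  have hspecu := h.hinv_spec hw (s n) (h.theta_mem_region hw hu (n+1)) hYu
  have hspecv := h.hinv_spec hw (s n) (h.theta_mem_region hw hv (n+1)) hYv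
  have hstep := h.step_theta hw (s n) hspecu.1 hspecv.1 hYu hYv hspecu.2 hspecv.2
  have hYdiff : |qq δ A lam (u.1 (n-1)) (u.2 (n-1)) - qq δ A lam (v.1 (n-1)) (v.2 (n-1))|
      ≤ 2 * kap δ A * Dd K u v (n-1) := h.TY_step hw hu hv n
  have htdiff : |u.1 (n+1) - v.1 (n+1)| ≤ Dd K u v (n+1) := Dd_theta
  have hβ0 := beta_pos h.hK
  have hβ1 := beta_lt_one h.hK
  have hP0 := PP_pos h.hK
  have hκ2 := h.kap_le2
  have hD1 : (0:ℝ) ≤ Dd K u v (n-1) := Dd_nonneg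
  have hD2 : (0:ℝ) ≤ Dd K u v (n+1) := Dd_nonneg
  have hmax1 : Dd K u v (n-1) ≤ max (Dd K u v (n-1)) (Dd K u v (n+1)) := le_max_left _ _
  have hmax2 : Dd K u v (n+1) ≤ max (Dd K u v (n-1)) (Dd K u v (n+1)) := le_max_right _ _
  have hPPκ : PP K * (2 * kap δ A) ≤ (1 - beta K)/2 := by
    rw [le_div_iff₀ (by positivity : (0:ℝ) < 4*PP K)] at hκ2
    nlinarith
  calc |(Tmap δ K A lam w s u).1 n - (Tmap δ K A lam w s v).1 n|
      ≤ beta K * |u.1 (n+1) - v.1 (n+1)|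
        + PP K * |qq δ A lam (u.1 (n-1)) (u.2 (n-1)) - qq δ A lam (v.1 (n-1)) (v.2 (n-1))| := hstep
    _ ≤ beta K * max (Dd K u v (n-1)) (Dd K u v (n+1))
        + (1 - beta K)/2 * max (Dd K u v (n-1)) (Dd K u v (n+1)) := by
        have e1 : beta K * |u.1 (n+1) - v.1 (n+1)|
            ≤ beta K * max (Dd K u v (n-1)) (Dd K u v (n+1)) :=
          mul_le_mul_of_nonneg_left (le_trans htdiff hmax2) hβ0.le
        have e2 : PP K * |qq δ A lam (u.1 (n-1)) (u.2 (n-1)) - qq δ A lam (v.1 (n-1)) (v.2 (n-1))|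
            ≤ (1 - beta K)/2 * max (Dd K u v (n-1)) (Dd K u v (n+1)) := by
          calc PP K * |qq δ A lam (u.1 (n-1)) (u.2 (n-1)) - qq δ A lam (v.1 (n-1)) (v.2 (n-1))|
              ≤ PP K * (2 * kap δ A * Dd K u v (n-1)) :=
                mul_le_mul_of_nonneg_left hYdiff hP0.le
            _ = (PP K * (2 * kap δ A)) * Dd K u v (n-1) := by ring
            _ ≤ (1 - beta K)/2 * max (Dd K u v (n-1)) (Dd K u v (n+1)) := by
                apply mul_le_mul hPPκ hmax1 hD1 (by linarith)
        linarith
    _ = gam K * max (Dd K u v (n-1)) (Dd K u v (n+1)) := by rw [gam]; ring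

lemma Tmap_D (hw : WinOK δ K A lam w) {s : ℤ → Bool} {u v : (ℤ → ℝ) × (ℤ → ℝ)}
    (hu : Ok δ K A lam w s u) (hv : Ok δ K A lam w s v) (n : ℤ) :
    Dd K (Tmap δ K A lam w s u) (Tmap δ K A lam w s v) n
      ≤ gam K * max (Dd K u v (n-1)) (Dd K u v (n+1)) := by
  apply max_le
  · exact h.Ttheta_step hw hu hv n
  · have h1 := h.TY_step_w hw hu hv n
    have hγ := gam_pos h.hK
    have : gam K * Dd K u v (n-1) ≤ gam K * max (Dd K u v (n-1)) (Dd K u v (n+1)) :=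
      mul_le_mul_of_nonneg_left (le_max_left _ _) hγ.le
    linarith

end Hyp
end Dyn2

section Dyn3
variable {δ K A lam : ℝ} {w : Win}

def iter (δ K A lam : ℝ) (w : Win) (s : ℤ → Bool) : ℕ → (ℤ → ℝ) × (ℤ → ℝ)
  | 0 => (fun n => w.a (s n), fun _ => 0)
  | (k+1) => Tmap δ K A lam w s (iter δ K A lam w s k)

def R0 (K : ℝ) : ℝ := π + MM K

lemma R0_pos : 0 < R0 K := by
  have := MM_pos (K := K)
  have := pi_pos
  rw [R0]; linarith

namespace Hyp
variable (h : Hyp δ K A lam)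
include h

lemma iter_ok (hw : WinOK δ K A lam w) (s : ℤ → Bool) :
    ∀ k, Ok δ K A lam w s (iter δ K A lam w s k) := by
  intro k
  induction k with
  | zero =>
    constructor
    · intro n; exact ⟨le_refl _, hw.ab _⟩
    · intro n; exact ⟨le_refl _, h.eps_pos.le⟩
  | succ k ih => exact h.Tmap_ok hw ih

lemma abs_sub_region {x y : ℝ} (hx : x ∈ Set.Icc (lo K) (hi K))
    (hy : y ∈ Set.Icc (lo K) (hi K)) : |x - y| ≤ π := by
  have h1 : hi K - lo K ≤ π := by
    rw [lo, hi]; have := rho_pos h.hK; linarith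
  rw [abs_le]
  constructor <;> [linarith [hx.1, hy.2]; linarith [hx.2, hy.1]]

lemma Dd_bound_region (hw : WinOK δ K A lam w) {s s' : ℤ → Bool} {u v : (ℤ → ℝ) × (ℤ → ℝ)}
    (hu : Ok δ K A lam w s u) (hv : Ok δ K A lam w s' v) (n : ℤ) :
    Dd K u v n ≤ R0 K := by
  have h1 := h.abs_sub_region (h.theta_mem_region hw hu n) (h.theta_mem_region hw hv n)
  have h2 : |u.2 n - v.2 n| ≤ 1 := by
    have e1 := (hu.2 n).1; have e2 := (hu.2 n).2
    have e3 := (hv.2 n).1; have e4 := (hv.2 n).2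
    have := h.eps_le_one
    rw [abs_le]; constructor <;> linarith
  have hM := MM_pos (K := K)
  rw [Dd, R0]
  apply max_le
  · linarith
  · have : MM K * |u.2 n - v.2 n| ≤ MM K * 1 := mul_le_mul_of_nonneg_left h2 hM.le
    have := pi_pos
    linarith

lemma iter_D (hw : WinOK δ K A lam w) (s : ℤ → Bool) :
    ∀ k, ∀ n, Dd K (iter δ K A lam w s (k+1)) (iter δ K A lam w s k) n ≤ R0 K * gam K ^ k := by
  intro k
  induction k with
  | zero =>
    intro n
    have := h.Dd_bound_region hw (h.iter_ok hw s 1) (h.iter_ok hw s 0) n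
    simpa using this
  | succ k ih =>
    intro n
    have hstep := h.Tmap_D hw (h.iter_ok hw s (k+1)) (h.iter_ok hw s k) n
    have hγ := gam_pos h.hK
    have h1 : max (Dd K (iter δ K A lam w s (k+1)) (iter δ K A lam w s k) (n-1))
        (Dd K (iter δ K A lam w s (k+1)) (iter δ K A lam w s k) (n+1)) ≤ R0 K * gam K ^ k :=
      max_le (ih (n-1)) (ih (n+1))
    calc Dd K (iter δ K A lam w s (k+1+1)) (iter δ K A lam w s (k+1)) n
        ≤ gam K * max (Dd K (iter δ K A lam w s (k+1)) (iter δ K A lam w s k) (n-1))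
            (Dd K (iter δ K A lam w s (k+1)) (iter δ K A lam w s k) (n+1)) := hstep
      _ ≤ gam K * (R0 K * gam K ^ k) := mul_le_mul_of_nonneg_left h1 hγ.le
      _ = R0 K * gam K ^ (k+1) := by ring

lemma exists_good (hw : WinOK δ K A lam w) (s : ℤ → Bool) :
    ∃ u, Good δ K A lam w s u := by
  have hγ1 := gam_lt_one h.hK
  have hγ0 := gam_pos h.hK
  have hR0 := R0_pos (K := K)
  set I := iter δ K A lam w s with hI
  have hcθ : ∀ n : ℤ, CauchySeq (fun k => (I k).1 n) := by
    intro n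
    apply cauchySeq_of_le_geometric (gam K) (R0 K) hγ1
    intro k
    have h1 := h.iter_D hw s k n
    have h2 : dist ((I k).1 n) ((I (k+1)).1 n) = |(I (k+1)).1 n - (I k).1 n| := by
      rw [Real.dist_eq, abs_sub_comm]
    have h3 : |(I (k+1)).1 n - (I k).1 n| ≤ Dd K (I (k+1)) (I k) n := Dd_theta
    rw [h2]; linarith
  have hcY : ∀ n : ℤ, CauchySeq (fun k => (I k).2 n) := by
    intro n
    apply cauchySeq_of_le_geometric (gam K) (R0 K) hγ1
    intro k
    have h1 := h.iter_D hw s k n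
    have h2 : dist ((I k).2 n) ((I (k+1)).2 n) = |(I (k+1)).2 n - (I k).2 n| := by
      rw [Real.dist_eq, abs_sub_comm]
    have h3 : |(I (k+1)).2 n - (I k).2 n| ≤ Dd K (I (k+1)) (I k) n := Dd_Y'
    rw [h2]; linarith
  choose th hth using fun n => cauchySeq_tendsto_of_complete (hcθ n)
  choose ty hty using fun n => cauchySeq_tendsto_of_complete (hcY n)
  have hdθ : ∀ n, Filter.Tendsto (fun k => dist ((I k).1 n) (th n)) Filter.atTop (nhds 0) := by
    intro n
    simpa using (hth n).dist (tendsto_const_nhds (x := th n))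
  have hdY : ∀ n, Filter.Tendsto (fun k => dist ((I k).2 n) (ty n)) Filter.atTop (nhds 0) := by
    intro n
    simpa using (hty n).dist (tendsto_const_nhds (x := ty n))
  have hmem1 : ∀ n, th n ∈ Set.Icc (w.a (s n)) (w.b (s n)) := by
    intro n
    exact isClosed_Icc.mem_of_tendsto (hth n)
      (Filter.Eventually.of_forall fun k => (h.iter_ok hw s k).1 n)
  have hmem2 : ∀ n, ty n ∈ Set.Icc 0 (eps δ A) := by
    intro n
    exact isClosed_Icc.mem_of_tendsto (hty n)
      (Filter.Eventually.of_forall fun k => (h.iter_ok hw s k).2 n)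
  have hreg : ∀ n, th n ∈ Set.Icc (lo K) (hi K) := fun n => win_subset hw (s n) (hmem1 n)
  refine ⟨(th, ty), ⟨⟨hmem1, hmem2⟩, ?_, ?_⟩⟩
  · -- Y recursion
    intro n
    have hseq : ∀ k, (I (k+1)).2 (n+1) = qq δ A lam ((I k).1 n) ((I k).2 n) := by
      intro k
      show (Tmap δ K A lam w s (I k)).2 (n+1) = _
      simp [Tmap, add_sub_cancel_right]
    have hL : Filter.Tendsto (fun k => (I (k+1)).2 (n+1)) Filter.atTop (nhds (ty (n+1))) :=
      (hty (n+1)).comp (Filter.tendsto_add_atTop_nat 1)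
    have hR : Filter.Tendsto (fun k => qq δ A lam ((I k).1 n) ((I k).2 n)) Filter.atTop
        (nhds (qq δ A lam (th n) (ty n))) := by
      rw [tendsto_iff_dist_tendsto_zero]
      apply squeeze_zero (fun k => dist_nonneg)
        (g := fun k => kap δ A * (dist ((I k).1 n) (th n) + dist ((I k).2 n) (ty n)))
      · intro k
        have hlip := h.qq_lip (h.theta_mem_region hw (h.iter_ok hw s k) n) (hreg n)
          ((h.iter_ok hw s k).2 n) (hmem2 n)
        rw [Real.dist_eq, Real.dist_eq, Real.dist_eq]
        exact hlip
      · have := ((hdθ n).add (hdY n)).const_mul (kap δ A)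
        simpa using this
    have hR' : Filter.Tendsto (fun k => (I (k+1)).2 (n+1)) Filter.atTop
        (nhds (qq δ A lam (th n) (ty n))) :=
      Filter.Tendsto.congr (fun k => (hseq k).symm) hR
    exact tendsto_nhds_unique hL hR'
  · -- gg relation
    intro n
    have hseq : ∀ k, gg K A lam ((I (k+1)).2 n) ((I (k+1)).1 n)
        = (I k).1 (n+1) + 2*π*(w.j (s n)) := by
      intro k
      exact (h.hinv_spec hw (s n) (h.theta_mem_region hw (h.iter_ok hw s k) (n+1))
        (h.qq_mem (h.theta_mem_region hw (h.iter_ok hw s k) (n-1))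
          ((h.iter_ok hw s k).2 (n-1)))).2
    have hL : Filter.Tendsto (fun k => gg K A lam ((I (k+1)).2 n) ((I (k+1)).1 n))
        Filter.atTop (nhds (gg K A lam (ty n) (th n))) := by
      rw [tendsto_iff_dist_tendsto_zero]
      apply squeeze_zero (fun k => dist_nonneg)
        (g := fun k => (5*K/(rho K)^2) * dist ((I (k+1)).2 n) (ty n)
          + (1 + 5*K/(rho K)^2) * dist ((I (k+1)).1 n) (th n))
      · intro k
        have hokk := h.iter_ok hw s (k+1)
        have htri := dist_triangle (gg K A lam ((I (k+1)).2 n) ((I (k+1)).1 n))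
          (gg K A lam (ty n) ((I (k+1)).1 n)) (gg K A lam (ty n) (th n))
        have e1 : dist (gg K A lam ((I (k+1)).2 n) ((I (k+1)).1 n))
            (gg K A lam (ty n) ((I (k+1)).1 n))
            ≤ (5*K/(rho K)^2) * dist ((I (k+1)).2 n) (ty n) := by
          rw [Real.dist_eq, Real.dist_eq]
          exact h.gg_Y_lip (h.theta_mem_region hw hokk n) (hokk.2 n) (hmem2 n)
        have e2 : dist (gg K A lam (ty n) ((I (k+1)).1 n)) (gg K A lam (ty n) (th n))
            ≤ (1 + 5*K/(rho K)^2) * dist ((I (k+1)).1 n) (th n) := by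
          rw [Real.dist_eq, Real.dist_eq]
          exact h.gg_x_lip (hmem2 n) (h.theta_mem_region hw hokk n) (hreg n)
        linarith
      · have h1 : Filter.Tendsto (fun k => dist ((I (k+1)).2 n) (ty n)) Filter.atTop (nhds 0) :=
          (hdY n).comp (Filter.tendsto_add_atTop_nat 1)
        have h2 : Filter.Tendsto (fun k => dist ((I (k+1)).1 n) (th n)) Filter.atTop (nhds 0) :=
          (hdθ n).comp (Filter.tendsto_add_atTop_nat 1)
        have := (h1.const_mul (5*K/(rho K)^2)).add (h2.const_mul (1 + 5*K/(rho K)^2))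
        simpa [mul_comm] using this
    have hR : Filter.Tendsto (fun k => (I k).1 (n+1) + 2*π*(w.j (s n))) Filter.atTop
        (nhds (th (n+1) + 2*π*(w.j (s n)))) := (hth (n+1)).add_const _
    have hL' : Filter.Tendsto (fun k => (I k).1 (n+1) + 2*π*(w.j (s n))) Filter.atTop
        (nhds (gg K A lam (ty n) (th n))) :=
      Filter.Tendsto.congr (fun k => hseq k) hL
    exact tendsto_nhds_unique hL' hR

end Hyp
end Dyn3

section Dyn4
variable {δ K A lam : ℝ} {w : Win}

namespace Hyp
variable (h : Hyp δ K A lam)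
include h

lemma good_Y_eq {s : ℤ → Bool} {u : (ℤ → ℝ) × (ℤ → ℝ)}
    (hu : Good δ K A lam w s u) (n : ℤ) :
    u.2 n = qq δ A lam (u.1 (n-1)) (u.2 (n-1)) := by
  have := hu.2.1 (n-1)
  rwa [sub_add_cancel] at this

lemma good_stepY (hw : WinOK δ K A lam w) {s s' : ℤ → Bool} {u v : (ℤ → ℝ) × (ℤ → ℝ)}
    (hu : Good δ K A lam w s u) (hv : Good δ K A lam w s' v) (n : ℤ) :
    |u.2 n - v.2 n| ≤ 2 * kap δ A * Dd K u v (n-1) := by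
  rw [h.good_Y_eq hu n, h.good_Y_eq hv n]
  have hlip := h.qq_lip (h.theta_mem_region hw hu.1 (n-1)) (h.theta_mem_region hw hv.1 (n-1))
    (hu.1.2 (n-1)) (hv.1.2 (n-1))
  have hκ := h.kap_pos
  have h1 : |u.1 (n-1) - v.1 (n-1)| ≤ Dd K u v (n-1) := Dd_theta
  have h2 : |u.2 (n-1) - v.2 (n-1)| ≤ Dd K u v (n-1) := Dd_Y'
  calc |qq δ A lam (u.1 (n-1)) (u.2 (n-1)) - qq δ A lam (v.1 (n-1)) (v.2 (n-1))|
      ≤ kap δ A * (|u.1 (n-1) - v.1 (n-1)| + |u.2 (n-1) - v.2 (n-1)|) := hlip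
    _ ≤ kap δ A * (Dd K u v (n-1) + Dd K u v (n-1)) := by
        apply mul_le_mul_of_nonneg_left _ hκ.le
        linarith
    _ = 2 * kap δ A * Dd K u v (n-1) := by ring

lemma good_step (hw : WinOK δ K A lam w) {s s' : ℤ → Bool} {u v : (ℤ → ℝ) × (ℤ → ℝ)}
    (hu : Good δ K A lam w s u) (hv : Good δ K A lam w s' v) {n : ℤ} (hsn : s n = s' n) :
    Dd K u v n ≤ gam K * max (Dd K u v (n-1)) (Dd K u v (n+1)) := by
  have hYd := h.good_stepY hw hu hv n
  have hβ0 := beta_pos h.hK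
  have hβ1 := beta_lt_one h.hK
  have hP0 := PP_pos h.hK
  have hκ2 := h.kap_le2
  have hκ1 := h.kap_le1
  have hγ := gam_pos h.hK
  have hM := MM_pos (K := K)
  have hD1 : (0:ℝ) ≤ Dd K u v (n-1) := Dd_nonneg
  have hmax1 : Dd K u v (n-1) ≤ max (Dd K u v (n-1)) (Dd K u v (n+1)) := le_max_left _ _
  have hmax2 : Dd K u v (n+1) ≤ max (Dd K u v (n-1)) (Dd K u v (n+1)) := le_max_right _ _
  apply max_le
  · -- theta part
    have hvmem : v.1 n ∈ Set.Icc (w.a (s n)) (w.b (s n)) := by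
      rw [hsn]; exact hv.1.1 n
    have hggu : gg K A lam (u.2 n) (u.1 n) = u.1 (n+1) + 2*π*(w.j (s n)) := hu.2.2 n
    have hggv : gg K A lam (v.2 n) (v.1 n) = v.1 (n+1) + 2*π*(w.j (s n)) := by
      rw [hsn]; exact hv.2.2 n
    have hstep := h.step_theta hw (s n) (hu.1.1 n) hvmem (hu.1.2 n) (hv.1.2 n) hggu hggv
    have htd : |u.1 (n+1) - v.1 (n+1)| ≤ Dd K u v (n+1) := Dd_theta
    have hPPκ : PP K * (2 * kap δ A) ≤ (1 - beta K)/2 := by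
      rw [le_div_iff₀ (by positivity : (0:ℝ) < 4*PP K)] at hκ2
      nlinarith
    calc |u.1 n - v.1 n|
        ≤ beta K * |u.1 (n+1) - v.1 (n+1)| + PP K * |u.2 n - v.2 n| := hstep
      _ ≤ beta K * max (Dd K u v (n-1)) (Dd K u v (n+1))
          + (1 - beta K)/2 * max (Dd K u v (n-1)) (Dd K u v (n+1)) := by
          have e1 : beta K * |u.1 (n+1) - v.1 (n+1)|
              ≤ beta K * max (Dd K u v (n-1)) (Dd K u v (n+1)) :=
            mul_le_mul_of_nonneg_left (le_trans htd hmax2) hβ0.le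
          have e2 : PP K * |u.2 n - v.2 n|
              ≤ (1 - beta K)/2 * max (Dd K u v (n-1)) (Dd K u v (n+1)) := by
            calc PP K * |u.2 n - v.2 n| ≤ PP K * (2 * kap δ A * Dd K u v (n-1)) :=
                  mul_le_mul_of_nonneg_left hYd hP0.le
              _ = (PP K * (2 * kap δ A)) * Dd K u v (n-1) := by ring
              _ ≤ (1 - beta K)/2 * max (Dd K u v (n-1)) (Dd K u v (n+1)) :=
                  mul_le_mul hPPκ hmax1 hD1 (by linarith)
          linarith
      _ = gam K * max (Dd K u v (n-1)) (Dd K u v (n+1)) := by rw [gam]; ring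
  · -- Y part
    have h2 : MM K * |u.2 n - v.2 n| ≤ MM K * (2 * kap δ A * Dd K u v (n-1)) :=
      mul_le_mul_of_nonneg_left hYd hM.le
    have h3 : MM K * (2 * kap δ A) ≤ gam K := by
      rw [le_div_iff₀ (by positivity : (0:ℝ) < 2*MM K)] at hκ1
      nlinarith
    have h4 : (MM K * (2 * kap δ A)) * Dd K u v (n-1) ≤ gam K * max (Dd K u v (n-1)) (Dd K u v (n+1)) :=
      mul_le_mul h3 hmax1 hD1 hγ.le
    calc MM K * |u.2 n - v.2 n| ≤ (MM K * (2 * kap δ A)) * Dd K u v (n-1) := by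
          rw [mul_assoc] at h2 ⊢; linarith [h2]
      _ ≤ gam K * max (Dd K u v (n-1)) (Dd K u v (n+1)) := h4

lemma good_decay (hw : WinOK δ K A lam w) {s s' : ℤ → Bool} {u v : (ℤ → ℝ) × (ℤ → ℝ)}
    (hu : Good δ K A lam w s u) (hv : Good δ K A lam w s' v) (N : ℕ)
    (hagree : ∀ n : ℤ, n.natAbs ≤ N → s n = s' n) :
    ∀ j : ℕ, ∀ n : ℤ, n.natAbs + j ≤ N + 1 → Dd K u v n ≤ gam K ^ j * R0 K := by
  intro j
  induction j with
  | zero =>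
    intro n _
    simpa using h.Dd_bound_region hw hu.1 hv.1 n
  | succ j ih =>
    intro n hn
    have hsn : s n = s' n := hagree n (by omega)
    have hstep := h.good_step hw hu hv hsn
    have hγ := gam_pos h.hK
    have h1 := ih (n-1) (by omega)
    have h2 := ih (n+1) (by omega)
    calc Dd K u v n ≤ gam K * max (Dd K u v (n-1)) (Dd K u v (n+1)) := hstep
      _ ≤ gam K * (gam K ^ j * R0 K) :=
          mul_le_mul_of_nonneg_left (max_le h1 h2) hγ.le
      _ = gam K ^ (j+1) * R0 K := by ring

lemma good_unique (hw : WinOK δ K A lam w) {s : ℤ → Bool} {u v : (ℤ → ℝ) × (ℤ → ℝ)}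
    (hu : Good δ K A lam w s u) (hv : Good δ K A lam w s v) : u = v := by
  have hγ0 := gam_pos h.hK
  have hγ1 := gam_lt_one h.hK
  have hR0 := R0_pos (K := K)
  have hDzero : ∀ n, Dd K u v n = 0 := by
    intro n
    have hbd : ∀ j : ℕ, Dd K u v n ≤ gam K ^ j * R0 K := by
      intro j
      exact h.good_decay hw hu hv (n.natAbs + j) (fun _ _ => rfl) j n (by omega)
    have hlim : Filter.Tendsto (fun j : ℕ => gam K ^ j * R0 K) Filter.atTop (nhds 0) := by
      have := tendsto_pow_atTop_nhds_zero_of_lt_one hγ0.le hγ1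
      simpa using this.mul_const (R0 K)
    have := ge_of_tendsto' hlim hbd
    exact le_antisymm this Dd_nonneg
  have hM := MM_pos (K := K)
  have h1 : ∀ n, u.1 n = v.1 n := by
    intro n
    have := hDzero n
    have h2 : |u.1 n - v.1 n| ≤ 0 := by
      rw [← this]; exact Dd_theta
    have := abs_nonneg (u.1 n - v.1 n)
    have : |u.1 n - v.1 n| = 0 := le_antisymm h2 this
    rw [abs_eq_zero] at this; linarith [this, sub_eq_zero.mp this]
  have h2 : ∀ n, u.2 n = v.2 n := by
    intro n
    have h0 := hDzero n
    have h2 : MM K * |u.2 n - v.2 n| ≤ 0 := by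
      rw [← h0]; exact Dd_Y
    have h3 : (0:ℝ) ≤ MM K * |u.2 n - v.2 n| := by positivity
    have h4 : MM K * |u.2 n - v.2 n| = 0 := le_antisymm h2 h3
    have h5 : |u.2 n - v.2 n| = 0 := by
      rcases mul_eq_zero.mp h4 with hc | hc
      · exact absurd hc (ne_of_gt hM)
      · exact hc
    rw [abs_eq_zero, sub_eq_zero] at h5
    exact h5
  exact Prod.ext (funext h1) (funext h2)

end Hyp
end Dyn4

section Dyn5
variable {δ K A lam : ℝ} {w : Win}

open Classical in
noncomputable def Fraw (δ K A lam : ℝ) (y x : ℝ) : AddCircle (2*π) × ℝ :=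
  if 0 < y + A + lam*Real.sin x then
    (((x - K*Real.log (y + A + lam*Real.sin x) : ℝ) : AddCircle (2*π)),
      (y + A + lam*Real.sin x)^δ)
  else (0, 0)

lemma Fraw_periodic (δ K A lam y : ℝ) :
    Function.Periodic (Fraw δ K A lam y) (2*π) := by
  intro x
  have hs : Real.sin (x + 2*π) = Real.sin x := Real.sin_periodic x
  unfold Fraw
  rw [hs]
  by_cases hpos : 0 < y + A + lam*Real.sin x
  · rw [if_pos hpos, if_pos hpos]
    have : ((x + 2*π - K*Real.log (y + A + lam*Real.sin x) : ℝ) : AddCircle (2*π))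
        = ((x - K*Real.log (y + A + lam*Real.sin x) : ℝ) : AddCircle (2*π)) := by
      have heq : x + 2*π - K*Real.log (y + A + lam*Real.sin x)
          = (x - K*Real.log (y + A + lam*Real.sin x)) + 2*π := by ring
      rw [heq]
      exact AddCircle.coe_add_period (2*π) _
    rw [this]
  · rw [if_neg hpos, if_neg hpos]

noncomputable def FbarMap (δ K A lam : ℝ) : AddCircle (2*π) × ℝ → AddCircle (2*π) × ℝ :=
  fun p => (Fraw_periodic δ K A lam p.2).lift p.1

lemma FbarMap_spec (δ K A lam : ℝ) (x y : ℝ) (hpos : 0 < y + A + lam*Real.sin x) :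
    FbarMap δ K A lam (((x:ℝ) : AddCircle (2*π)), y)
      = (((x - K*Real.log (y + A + lam*Real.sin x) : ℝ) : AddCircle (2*π)),
          (y + A + lam*Real.sin x)^δ) := by
  show (Fraw_periodic δ K A lam y).lift ((x:ℝ) : AddCircle (2*π)) = _
  rw [Function.Periodic.lift_coe]
  unfold Fraw
  rw [if_pos hpos]

lemma coe_add_int_mul (x : ℝ) (j : ℤ) :
    ((x + 2*π*j : ℝ) : AddCircle (2*π)) = ((x : ℝ) : AddCircle (2*π)) := by
  rw [QuotientAddGroup.eq]
  refine AddSubgroup.mem_zmultiples_iff.mpr ⟨-j, ?_⟩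
  rw [zsmul_eq_mul]
  push_cast
  ring

-- symbol and sequence shifts
def shf (s : ℤ → Bool) : ℤ → Bool := fun n => s (n+1)
def shfInv (s : ℤ → Bool) : ℤ → Bool := fun n => s (n-1)
def ushift (u : (ℤ → ℝ) × (ℤ → ℝ)) : (ℤ → ℝ) × (ℤ → ℝ) :=
  (fun n => u.1 (n+1), fun n => u.2 (n+1))

lemma shf_shfInv (s : ℤ → Bool) : shf (shfInv s) = s := by
  funext n; simp [shf, shfInv]

lemma good_shift {s : ℤ → Bool} {u : (ℤ → ℝ) × (ℤ → ℝ)}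
    (hu : Good δ K A lam w s u) : Good δ K A lam w (shf s) (ushift u) := by
  obtain ⟨⟨hm1, hm2⟩, hY, hg⟩ := hu
  refine ⟨⟨fun n => hm1 (n+1), fun n => hm2 (n+1)⟩, fun n => ?_, fun n => ?_⟩
  · exact hY (n+1)
  · exact hg (n+1)

namespace Hyp
variable (h : Hyp δ K A lam)
include h

-- the two-sided determination lemma
lemma inj_core (hw : WinOK δ K A lam w) {s s' : ℤ → Bool} {u v : (ℤ → ℝ) × (ℤ → ℝ)}
    (hu : Good δ K A lam w s u) (hv : Good δ K A lam w s' v)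
    (h0 : u.1 0 = v.1 0 ∧ u.2 0 = v.2 0) : s = s' ∧ u = v := by
  have hπ := pi_gt_three
  have hA := h.hA
  -- from θ-difference being a multiple of 2π and small, conclude equality
  have key : ∀ n : ℤ, ∀ m : ℤ, u.1 n - v.1 n = 2*π*m → u.1 n = v.1 n ∧ m = 0 := by
    intro n m heq
    have hb := h.abs_sub_region (h.theta_mem_region hw hu.1 n) (h.theta_mem_region hw hv.1 n)
    rw [heq] at hb
    have hm : m = 0 := by
      by_contra hm0
      have h1 : (1:ℝ) ≤ |(m:ℝ)| := by
        have : (1:ℤ) ≤ |m| := by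
          rcases lt_or_gt_of_ne hm0 with hc | hc
          · rw [abs_of_neg hc]; omega
          · rw [abs_of_pos hc]; omega
        calc (1:ℝ) ≤ (|m| : ℤ) := by exact_mod_cast this
          _ = |(m:ℝ)| := by push_cast; rfl
      have h2 : |2*π*(m:ℝ)| = 2*π*|(m:ℝ)| := by
        rw [abs_mul, abs_of_pos (by positivity : (0:ℝ) < 2*π)]
      nlinarith
    constructor
    · rw [hm] at heq; push_cast at heq; linarith
    · exact hm
  have hjs : ∀ n : ℤ, w.j (s n) = w.j (s' n) → s n = s' n := by
    intro n hj
    by_contra hne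
    have : w.j false = w.j true := by
      rcases Bool.eq_false_or_eq_true (s n) with h1 | h1 <;>
        rcases Bool.eq_false_or_eq_true (s' n) with h2 | h2
      · exact absurd (h1.trans h2.symm) hne
      · rw [h1, h2] at hj; exact hj.symm
      · rw [h1, h2] at hj; exact hj
      · exact absurd (h1.trans h2.symm) hne
    exact hw.jne this
  -- forward step
  have fwd : ∀ n : ℤ, (u.1 n = v.1 n ∧ u.2 n = v.2 n) →
      ((u.1 (n+1) = v.1 (n+1) ∧ u.2 (n+1) = v.2 (n+1)) ∧ s n = s' n) := by
    intro n ⟨e1, e2⟩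
    have hY : u.2 (n+1) = v.2 (n+1) := by
      rw [hu.2.1 n, hv.2.1 n, e1, e2]
    have hgu := hu.2.2 n
    have hgv := hv.2.2 n
    rw [e1, e2] at hgu
    have hd : u.1 (n+1) - v.1 (n+1) = 2*π*(((w.j (s' n) - w.j (s n)) : ℤ) : ℝ) := by
      push_cast
      have := hgu.symm.trans hgv
      linarith
    obtain ⟨hth, hm⟩ := key (n+1) _ hd
    have hjeq : w.j (s n) = w.j (s' n) := by omega
    exact ⟨⟨hth, hY⟩, hjs n hjeq⟩
  -- backward step
  have bwd : ∀ n : ℤ, (u.1 (n+1) = v.1 (n+1) ∧ u.2 (n+1) = v.2 (n+1)) →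
      ((u.1 n = v.1 n ∧ u.2 n = v.2 n) ∧ s n = s' n) := by
    intro n ⟨e1, e2⟩
    have hqq : qq δ A lam (u.1 n) (u.2 n) = qq δ A lam (v.1 n) (v.2 n) := by
      rw [← hu.2.1 n, ← hv.2.1 n, e2]
    have hW := h.qq_injW (h.theta_mem_region hw hu.1 n) (h.theta_mem_region hw hv.1 n)
      (hu.1.2 n) (hv.1.2 n) hqq
    have hgu := hu.2.2 n
    have hgv := hv.2.2 n
    have hd : u.1 n - v.1 n = 2*π*(((w.j (s n) - w.j (s' n)) : ℤ) : ℝ) := by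
      have hggu : u.1 n - K*Real.log A - K*Real.log (W0 A lam (u.1 n) + u.2 n)
          = u.1 (n+1) + 2*π*(w.j (s n)) := hgu
      have hggv : v.1 n - K*Real.log A - K*Real.log (W0 A lam (v.1 n) + v.2 n)
          = v.1 (n+1) + 2*π*(w.j (s' n)) := hgv
      rw [hW] at hggu
      push_cast
      rw [e1] at hggu
      linarith
    obtain ⟨hth, hm⟩ := key n _ hd
    have hjeq : w.j (s n) = w.j (s' n) := by omega
    have hYeq : u.2 n = v.2 n := by
      have : W0 A lam (u.1 n) + u.2 n = W0 A lam (v.1 n) + v.2 n := hW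
      rw [hth] at this
      linarith
    exact ⟨⟨hth, hYeq⟩, hjs n hjeq⟩
  -- all levels equal
  have hall : ∀ n : ℤ, u.1 n = v.1 n ∧ u.2 n = v.2 n := by
    intro n
    induction n using Int.induction_on with
    | zero => exact h0
    | succ i ih => exact (fwd i ih).1
    | pred i ih => exact (bwd (-i-1) (by simpa [sub_add_cancel] using ih)).1
  constructor
  · funext n
    exact (fwd n (hall n)).2
  · exact Prod.ext (funext fun n => (hall n).1) (funext fun n => (hall n).2)

end Hyp
end Dyn5

section Dyn6
variable {δ K A lam : ℝ} {w : Win}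

noncomputable def Phi (h : Hyp δ K A lam) (hw : WinOK δ K A lam w) (s : ℤ → Bool) :
    (ℤ → ℝ) × (ℤ → ℝ) := (h.exists_good hw s).choose

noncomputable def pointOf (A : ℝ) (u : (ℤ → ℝ) × (ℤ → ℝ)) : AddCircle (2*π) × ℝ :=
  (((u.1 0 : ℝ) : AddCircle (2*π)), A * u.2 0)

namespace Hyp
variable (h : Hyp δ K A lam)
include h

lemma Phi_good (hw : WinOK δ K A lam w) (s : ℤ → Bool) :
    Good δ K A lam w s (Phi h hw s) := (h.exists_good hw s).choose_spec

lemma Phi_shift (hw : WinOK δ K A lam w) (s : ℤ → Bool) :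
    Phi h hw (shf s) = ushift (Phi h hw s) :=
  h.good_unique hw (h.Phi_good hw (shf s)) (good_shift (h.Phi_good hw s))

lemma Fbar_step (hw : WinOK δ K A lam w) {s : ℤ → Bool} {u : (ℤ → ℝ) × (ℤ → ℝ)}
    (hu : Good δ K A lam w s u) :
    FbarMap δ K A lam (pointOf A u) = pointOf A (ushift u) := by
  have hA := h.hA
  have hρ := rho_pos h.hK
  have hreg := h.theta_mem_region hw hu.1 0
  have hYm := hu.1.2 0
  have hWge := h.WY_pos hreg hYm
  have hWpos : (0:ℝ) < W0 A lam (u.1 0) + u.2 0 := lt_of_lt_of_le (by positivity) hWge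
  have hw_eq : A*(u.2 0) + A + lam*Real.sin (u.1 0) = A*(W0 A lam (u.1 0) + u.2 0) := by
    unfold W0 rr; field_simp; ring
  have hpos : 0 < A*(u.2 0) + A + lam*Real.sin (u.1 0) := by
    rw [hw_eq]; positivity
  have hspec := FbarMap_spec δ K A lam (u.1 0) (A*(u.2 0)) hpos
  unfold pointOf
  rw [hspec]
  have hlog : u.1 0 - K*Real.log (A*(u.2 0) + A + lam*Real.sin (u.1 0))
      = gg K A lam (u.2 0) (u.1 0) := by
    rw [hw_eq, gg, Real.log_mul (ne_of_gt hA) (ne_of_gt hWpos)]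
    ring
  have hgg := hu.2.2 0
  refine Prod.ext_iff.mpr ⟨?_, ?_⟩
  · -- first coordinates
    show ((u.1 0 - K*Real.log (A*(u.2 0) + A + lam*Real.sin (u.1 0)) : ℝ) : AddCircle (2*π))
        = ((u.1 (0+1) : ℝ) : AddCircle (2*π))
    rw [hlog, hgg]
    exact coe_add_int_mul _ _
  · -- second coordinates
    show (A*(u.2 0) + A + lam*Real.sin (u.1 0))^δ = A * u.2 (0+1)
    rw [hw_eq, hu.2.1 0]
    rw [Real.mul_rpow hA.le hWpos.le]
    unfold qq
    rw [← mul_assoc]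
    congr 1
    rw [mul_comm A (A^(δ-1)), ← Real.rpow_add_one (ne_of_gt hA) (δ-1)]
    norm_num

lemma theta_eq_of_coe_eq (hw : WinOK δ K A lam w) {x y : ℝ}
    (hx : x ∈ Set.Icc (lo K) (hi K)) (hy : y ∈ Set.Icc (lo K) (hi K))
    (hc : ((x : ℝ) : AddCircle (2*π)) = ((y : ℝ) : AddCircle (2*π))) : x = y := by
  have hπ := pi_gt_three
  rw [QuotientAddGroup.eq] at hc
  obtain ⟨k, hk⟩ := AddSubgroup.mem_zmultiples_iff.mp hc
  rw [zsmul_eq_mul] at hk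
  have hd : y - x = 2*π*(k:ℝ) := by push_cast at hk ⊢; linarith
  have hb := h.abs_sub_region hy hx
  rw [hd] at hb
  have hk0 : k = 0 := by
    by_contra hk0
    have h1 : (1:ℤ) ≤ |k| := by
      rcases lt_or_gt_of_ne hk0 with hc' | hc'
      · rw [abs_of_neg hc']; omega
      · rw [abs_of_pos hc']; omega
    have h1' : (1:ℝ) ≤ |(k:ℝ)| := by
      calc (1:ℝ) ≤ (|k| : ℤ) := by exact_mod_cast h1
        _ = |(k:ℝ)| := by push_cast; rfl
    have h2 : |2*π*(k:ℝ)| = 2*π*|(k:ℝ)| := by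
      rw [abs_mul, abs_of_pos (by positivity : (0:ℝ) < 2*π)]
    nlinarith
  rw [hk0] at hd
  push_cast at hd
  linarith

lemma PhiPt_inj (hw : WinOK δ K A lam w) :
    Function.Injective (fun s => pointOf A (Phi h hw s)) := by
  intro s s' heq
  simp only [pointOf, Prod.mk.injEq] at heq
  obtain ⟨hc1, hc2⟩ := heq
  have hA := h.hA
  have hY : (Phi h hw s).2 0 = (Phi h hw s').2 0 := mul_left_cancel₀ (ne_of_gt hA) hc2
  have hθ : (Phi h hw s).1 0 = (Phi h hw s').1 0 :=
    h.theta_eq_of_coe_eq hw (h.theta_mem_region hw (h.Phi_good hw s).1 0)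
      (h.theta_mem_region hw (h.Phi_good hw s').1 0) hc1
  exact (h.inj_core hw (h.Phi_good hw s) (h.Phi_good hw s') ⟨hθ, hY⟩).1

lemma PhiPt_cont (hw : WinOK δ K A lam w) :
    Continuous (fun s => pointOf A (Phi h hw s)) := by
  have hγ1 := gam_lt_one h.hK
  have hγ0 := gam_pos h.hK
  have hR0 := R0_pos (K := K)
  have hc0 : Continuous (fun s : ℤ → Bool => (((Phi h hw s).1 0 : ℝ), (Phi h hw s).2 0)) := by
    rw [continuous_iff_continuousAt]
    intro s
    rw [ContinuousAt, Metric.tendsto_nhds]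
    intro ε hε
    obtain ⟨N, hN⟩ := exists_pow_lt_of_lt_one (div_pos hε hR0) hγ1
    have hUopen : IsOpen (⋂ m ∈ Finset.Icc (-(N:ℤ)) (N:ℤ), {s' : ℤ → Bool | s' m = s m}) := by
      apply isOpen_biInter_finset
      intro m _
      have : {s' : ℤ → Bool | s' m = s m} = (fun s' : ℤ → Bool => s' m) ⁻¹' {s m} := rfl
      rw [this]
      exact (continuous_apply m).isOpen_preimage _ (isOpen_discrete _)
    have hUmem : s ∈ ⋂ m ∈ Finset.Icc (-(N:ℤ)) (N:ℤ), {s' : ℤ → Bool | s' m = s m} := by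
      simp
    filter_upwards [hUopen.mem_nhds hUmem] with s' hs'
    have hagree : ∀ m : ℤ, m.natAbs ≤ N → s' m = s m := by
      intro m hm
      have hm2 : m ∈ Finset.Icc (-(N:ℤ)) (N:ℤ) := by
        rw [Finset.mem_Icc]; omega
      exact Set.mem_iInter₂.mp hs' m hm2
    have hD := h.good_decay hw (h.Phi_good hw s') (h.Phi_good hw s) N hagree (N+1) 0
      (by simp)
    have hd1 : |(Phi h hw s').1 0 - (Phi h hw s).1 0|
        ≤ gam K ^ (N+1) * R0 K := le_trans Dd_theta hD
    have hd2 : |(Phi h hw s').2 0 - (Phi h hw s).2 0|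
        ≤ gam K ^ (N+1) * R0 K := le_trans Dd_Y' hD
    have hpow : gam K ^ (N+1) * R0 K < ε := by
      have h1 : gam K ^ (N+1) ≤ gam K ^ N := by
        rw [pow_succ]
        nlinarith [pow_nonneg hγ0.le N, pow_pos hγ0 N]
      rw [lt_div_iff₀ hR0] at hN
      nlinarith
    rw [Prod.dist_eq]
    apply max_lt
    · rw [Real.dist_eq]; linarith
    · rw [Real.dist_eq]; linarith
  have houter : Continuous (fun p : ℝ × ℝ => (((p.1 : ℝ) : AddCircle (2*π)), A * p.2)) := by
    apply Continuous.prodMk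
    · exact (AddCircle.continuous_mk' (2*π)).comp continuous_fst
    · exact continuous_const.mul continuous_snd
  exact houter.comp hc0

end Hyp
end Dyn6

section Master
variable {δ K A lam : ℝ}

lemma epsmax_pos (hδ : 1 < δ) (hK : 0 < K) : 0 < epsmax δ K := by
  have hρ := rho_pos hK
  have hτ := tau0_pos hK
  have hγ := gam_pos hK
  have hM := MM_pos (K := K)
  have hβ := beta_lt_one hK
  have hP := PP_pos hK
  have hδ0 : (0:ℝ) < δ := by linarith
  have h1 : (0:ℝ) < 1 - beta K := by linarith
  simp only [epsmax, lt_min_iff]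
  refine ⟨by norm_num, by positivity, by positivity, by positivity⟩

lemma Hyp.master (h : Hyp δ K A lam) :
    ∃ Fbar : AddCircle (2 * π) × ℝ → AddCircle (2 * π) × ℝ,
      (∀ x y : ℝ, 0 < y + A + lam * Real.sin x →
        Fbar (↑x, y) =
          (↑(x - K * Real.log (y + A + lam * Real.sin x)),
           (y + A + lam * Real.sin x) ^ δ)) ∧
      ∃ Λ : Set (AddCircle (2 * π) × ℝ), Λ.Nonempty ∧ IsCompact Λ ∧
        (∀ p ∈ Λ, p.2 ∈ Set.Icc (0 : ℝ) A ∧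
          ∀ x : ℝ, (↑x : AddCircle (2 * π)) = p.1 →
            0 < p.2 + A + lam * Real.sin x) ∧
        Fbar '' Λ = Λ ∧
        ∃ e : Λ ≃ₜ (ℤ → Bool),
          ∀ p q : Λ, (q : AddCircle (2 * π) × ℝ) = Fbar ↑p →
            (e q : ℤ → Bool) = fun n => e p (n + 1) := by
  obtain ⟨w, hw⟩ := h.exists_win
  set Φpt : (ℤ → Bool) → AddCircle (2*π) × ℝ := fun s => pointOf A (Phi h hw s) with hΦpt
  have hcont : Continuous Φpt := h.PhiPt_cont hw
  have hinj : Function.Injective Φpt := h.PhiPt_inj hw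
  have hstep : ∀ s, FbarMap δ K A lam (Φpt s) = Φpt (shf s) := by
    intro s
    show FbarMap δ K A lam (pointOf A (Phi h hw s)) = pointOf A (Phi h hw (shf s))
    rw [h.Fbar_step hw (h.Phi_good hw s), h.Phi_shift hw s]
  refine ⟨FbarMap δ K A lam, ?_, Set.range Φpt, Set.range_nonempty Φpt,
    isCompact_range hcont, ?_, ?_, ?_⟩
  · intro x y hpos; exact FbarMap_spec δ K A lam x y hpos
  · rintro p ⟨s, rfl⟩
    have hY := (h.Phi_good hw s).1.2 0
    have hA := h.hA
    have hlam0 : 0 < lam := lt_trans (mul_pos (fK_pos h.hK) h.hA) h.hlamlo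
    constructor
    · constructor
      · show 0 ≤ A * (Phi h hw s).2 0
        exact mul_nonneg hA.le hY.1
      · show A * (Phi h hw s).2 0 ≤ A
        have := h.eps_le_one
        nlinarith [hY.2]
    · intro x _
      have hs := Real.neg_one_le_sin x
      have h1 : lam * (-1) ≤ lam * Real.sin x := mul_le_mul_of_nonneg_left hs hlam0.le
      have h2 : (0:ℝ) ≤ A * (Phi h hw s).2 0 := mul_nonneg hA.le hY.1
      show 0 < A * (Phi h hw s).2 0 + A + lam * Real.sin x
      nlinarith [h.hlamhi]
  · ext z
    constructor
    · rintro ⟨_, ⟨s, rfl⟩, rfl⟩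
      exact ⟨shf s, (hstep s).symm⟩
    · rintro ⟨s, rfl⟩
      refine ⟨Φpt (shfInv s), ⟨shfInv s, rfl⟩, ?_⟩
      rw [hstep (shfInv s), shf_shfInv]
  · have hcont2 : Continuous fun s => ((Equiv.ofInjective Φpt hinj) s) := by
      have hco : (fun s => (((Equiv.ofInjective Φpt hinj) s : ↥(Set.range Φpt))
          : AddCircle (2*π) × ℝ)) = Φpt := by
        funext s
        simp
      apply continuous_induced_rng.2
      show Continuous fun s => (((Equiv.ofInjective Φpt hinj) s : ↥(Set.range Φpt))
          : AddCircle (2*π) × ℝ)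
      rw [hco]
      exact hcont
    set H : (ℤ → Bool) ≃ₜ ↥(Set.range Φpt) :=
      Continuous.homeoOfEquivCompactToT2 hcont2 with hH
    have hHcoe : ∀ s, ((H s : ↥(Set.range Φpt)) : AddCircle (2*π) × ℝ) = Φpt s := by
      intro s
      show (((Equiv.ofInjective Φpt hinj) s : ↥(Set.range Φpt)) : AddCircle (2*π) × ℝ) = Φpt s
      simp
    refine ⟨H.symm, ?_⟩
    intro p q hq
    have hp : H (H.symm p) = p := H.apply_symm_apply p
    have hpcoe : (p : AddCircle (2*π) × ℝ) = Φpt (H.symm p) := by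
      conv_lhs => rw [← hp]
      rw [hHcoe]
    have hqcoe : (q : AddCircle (2*π) × ℝ) = Φpt (shf (H.symm p)) := by
      rw [hq, hpcoe, hstep]
    have hq2 : q = H (shf (H.symm p)) := by
      apply Subtype.coe_injective
      show (q : AddCircle (2*π) × ℝ) = ((H (shf (H.symm p)) : ↥(Set.range Φpt)) : AddCircle (2*π) × ℝ)
      rw [hqcoe, hHcoe]
    rw [hq2, H.symm_apply_apply]
    rfl

end Master

end ThmE

open Real

/-- Theorem E: for `f(K)·A < λ < A` with `A` small, the map induced on the
cylinder `(ℝ/2πℤ) × ℝ` by the model first return map has a nonempty compact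
invariant set on which it is topologically conjugate to the full Bernoulli
shift on two symbols. -/
theorem stmt_14 (δ K : ℝ) (hδ : 1 < δ) (hK : 0 < K) :
    ∃ A₀ ∈ Set.Ioo (0 : ℝ) 1, ∀ A ∈ Set.Ioo (0 : ℝ) A₀, ∀ lam : ℝ,
      (Real.exp (4 * π / K) - 1) / (Real.exp (4 * π / K) - 1 / 4) * A < lam →
      lam < A →
      ∃ Fbar : AddCircle (2 * π) × ℝ → AddCircle (2 * π) × ℝ,
        (∀ x y : ℝ, 0 < y + A + lam * Real.sin x →
          Fbar (↑x, y) =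
            (↑(x - K * Real.log (y + A + lam * Real.sin x)),
             (y + A + lam * Real.sin x) ^ δ)) ∧
        ∃ Λ : Set (AddCircle (2 * π) × ℝ), Λ.Nonempty ∧ IsCompact Λ ∧
          (∀ p ∈ Λ, p.2 ∈ Set.Icc (0 : ℝ) A ∧
            ∀ x : ℝ, (↑x : AddCircle (2 * π)) = p.1 →
              0 < p.2 + A + lam * Real.sin x) ∧
          Fbar '' Λ = Λ ∧
          ∃ e : Λ ≃ₜ (ℤ → Bool),
            ∀ p q : Λ, (q : AddCircle (2 * π) × ℝ) = Fbar ↑p →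
              (e q : ℤ → Bool) = fun n => e p (n + 1) := by
  refine ⟨ThmE.A0 δ K, ?_, ?_⟩
  · have hε := ThmE.epsmax_pos hδ hK
    constructor
    · apply lt_min
      · norm_num
      · apply Real.rpow_pos_of_pos
        apply div_pos hε
        exact Real.rpow_pos_of_pos (by norm_num) δ
    · calc ThmE.A0 δ K ≤ 1/2 := min_le_left _ _
        _ < 1 := by norm_num
  · intro A hA lam hl1 hl2
    have h : ThmE.Hyp δ K A lam := by
      refine ⟨hδ, hK, hA.1, ?_, ?_, hl2, ?_⟩
      · exact lt_of_lt_of_le hA.2 (le_trans (min_le_left _ _) (by norm_num))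
      · show ThmE.fK K * A < lam
        simpa [ThmE.fK, ThmE.EK] using hl1
      · have h3 : (0:ℝ) < (3:ℝ)^δ := Real.rpow_pos_of_pos (by norm_num) δ
        have hε := ThmE.epsmax_pos hδ hK
        have hA0le : ThmE.A0 δ K ≤ (ThmE.epsmax δ K/3^δ)^(1/(δ-1)) := min_le_right _ _
        have hδ1 : (0:ℝ) < δ - 1 := by linarith
        have hxnn : (0:ℝ) ≤ ThmE.epsmax δ K/3^δ := by positivity
        have hAp : A^(δ-1) ≤ ((ThmE.epsmax δ K/3^δ)^(1/(δ-1)))^(δ-1) :=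
          Real.rpow_le_rpow hA.1.le (le_trans hA.2.le hA0le) hδ1.le
        have hpow : ((ThmE.epsmax δ K/3^δ)^(1/(δ-1)))^(δ-1) = ThmE.epsmax δ K/3^δ := by
          rw [← Real.rpow_mul hxnn, one_div_mul_cancel (ne_of_gt hδ1), Real.rpow_one]
        rw [hpow] at hAp
        calc (3:ℝ)^δ * A^(δ-1) ≤ 3^δ * (ThmE.epsmax δ K/3^δ) :=
              mul_le_mul_of_nonneg_left hAp h3.le
          _ = ThmE.epsmax δ K := by field_simp
    exact h.master
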